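/- arXiv:2007.01175 — 6 statements merged into one kernel-verified Lean document; each statement's English description precedes it below -/
import Mathlib

section
/- For any finitely supported signed measure ω on X, any point x ∈ X, and any n ≥ 1, the lowering identity holds: (ω+δ_x)_n − (ω)_n = n · Sym(δ_x ⊗ (ω)_{n−1}). -/
open Finset

section Defs

variable {X : Type*} [Fintype X] [DecidableEq X]

/-- The falling factorial measure `(ω)_n` on `X^n`, given by the density
`(ω)_n(y₁,…,y_n) = ω(y₁)(ω(y₂)−δ_{y₁}(y₂))⋯(ω(y_n)−δ_{y₁}(y_n)−⋯−δ_{y_{n−1}}(y_n))`. -/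
noncomputable def ff (ω : X → ℝ) : (n : ℕ) → (Fin n → X) → ℝ
  | 0 => fun _ => 1
  | n + 1 => fun y =>
      ff ω n (fun i => y i.castSucc) *
        (ω (y (Fin.last n)) - ∑ i : Fin n, if y i.castSucc = y (Fin.last n) then (1 : ℝ) else 0)

/-- Dirac measure at `x`. -/
noncomputable def diracMeas (x : X) : X → ℝ := fun a => if a = x then 1 else 0

/-- The measure `δ_{x₁}+⋯+δ_{x_k}` of a multiset `[x₁,…,x_k]`. -/
noncomputable def msMeas {k : ℕ} (x : Fin k → X) : X → ℝ :=
  fun a => ((Finset.univ.filter (fun i => x i = a)).card : ℝ)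

/-- Integration `⟨μ, f⟩` of a function against a measure on `X^n`. -/
noncomputable def pairing (n : ℕ) (μ f : (Fin n → X) → ℝ) : ℝ :=
  ∑ y : Fin n → X, μ y * f y

/-- Symmetrization of a function/measure on `X^n`. -/
noncomputable def symmFun (n : ℕ) (μ : (Fin n → X) → ℝ) : (Fin n → X) → ℝ :=
  fun y => (∑ π : Equiv.Perm (Fin n), μ (y ∘ π)) / n.factorial

/-- Tensor product of measures/functions on `X^k` and `X^m`. -/
noncomputable def tensFun {k m : ℕ} (μ : (Fin k → X) → ℝ) (ν : (Fin m → X) → ℝ) :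
    (Fin (k + m) → X) → ℝ :=
  fun y => μ (fun i => y (Fin.castAdd m i)) * ν (fun j => y (Fin.natAdd k j))

/-- Re-indexing along an equality of dimensions. -/
def castFun {m n : ℕ} (h : m = n) (μ : (Fin m → X) → ℝ) : (Fin n → X) → ℝ :=
  fun y => μ (fun i => y (Fin.cast h i))

/-- The product measure `ω^{⊗n}` (and likewise the tensor power `ξ^{⊗n}` of a function). -/
noncomputable def prodMeas (ω : X → ℝ) (n : ℕ) : (Fin n → X) → ℝ :=
  fun y => ∏ i, ω (y i)

/-- A function on `X^n` is symmetric. -/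
def IsSymmFun {n : ℕ} (f : (Fin n → X) → ℝ) : Prop :=
  ∀ (π : Equiv.Perm (Fin n)) (y : Fin n → X), f (y ∘ π) = f y

end Defs

/-- The set of surjections `Fin n → Fin k`; these correspond to set partitions of
`{1,…,n}` into `k` nonempty blocks together with an ordering of the blocks. -/
noncomputable def surjs (n k : ℕ) : Finset (Fin n → Fin k) :=
  Finset.univ.filter (fun g => Function.Surjective g)

/-- Cardinality of the fiber `g⁻¹(i)` (the size of block `i`). -/
def fiberCard {n k : ℕ} (g : Fin n → Fin k) (i : Fin k) : ℕ :=
  (Finset.univ.filter (fun j => g j = i)).card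

section Ops

variable {X : Type*} [Fintype X] [DecidableEq X]

/-- Stirling operator of the second kind `S(n,k) = Σ_{λ ∈ UP(n,k)} D_λ`:
summing the substitute-and-symmetrize operators over unordered partitions of `{1,…,n}`
into `k` nonempty blocks is the same as summing `f(y ∘ g)` over the surjections
`g : Fin n → Fin k` and dividing by `k!`. -/
noncomputable def Sop (n k : ℕ) (f : (Fin n → X) → ℝ) : (Fin k → X) → ℝ :=
  fun y => (∑ g ∈ surjs n k, f (y ∘ g)) / k.factorial

/-- Unsigned Stirling operator of the first kind
`c(n,k) = Σ_{λ={λ₁,…,λ_k} ∈ UP(n,k)} (|λ₁|−1)!⋯(|λ_k|−1)! · D_λ`. -/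
noncomputable def cop (n k : ℕ) (f : (Fin n → X) → ℝ) : (Fin k → X) → ℝ :=
  fun y => (∑ g ∈ surjs n k, (∏ i : Fin k, ((fiberCard g i - 1).factorial : ℝ)) * f (y ∘ g)) /
    k.factorial

/-- Stirling operator of the first kind `s(n,k) = (−1)^{n−k} c(n,k)`. -/
noncomputable def sop (n k : ℕ) (f : (Fin n → X) → ℝ) : (Fin k → X) → ℝ :=
  fun y => (-1 : ℝ) ^ (n - k) * cop n k f y

/-- Lah operator `L(n,k) = Σ_{λ={λ₁,…,λ_k} ∈ UP(n,k)} |λ₁|!⋯|λ_k|! · D_λ`. -/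
noncomputable def Lop (n k : ℕ) (f : (Fin n → X) → ℝ) : (Fin k → X) → ℝ :=
  fun y => (∑ g ∈ surjs n k, (∏ i : Fin k, ((fiberCard g i).factorial : ℝ)) * f (y ∘ g)) /
    k.factorial

end Ops


section FFLowAux
set_option linter.unusedSectionVars false
variable {X : Type*} [Fintype X] [DecidableEq X]

private lemma ffsucc' (ω : X → ℝ) (m : ℕ) (z : Fin (m+1) → X) :
    ff ω (m+1) z = ff ω m (fun i => z i.castSucc) *
      (ω (z (Fin.last m)) - ∑ i : Fin m, if z i.castSucc = z (Fin.last m) then (1 : ℝ) else 0) :=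
  rfl

private def cnt' {k : ℕ} (z : Fin k → X) (a : X) : ℕ :=
  (Finset.univ.filter fun j => z j = a).card

private lemma cnt'_eq_sum {k : ℕ} (z : Fin k → X) (a : X) :
    cnt' z a = ∑ j, (if z j = a then 1 else 0) := by
  rw [cnt', Finset.card_filter]

private lemma ff_eq_prod' (ω : X → ℝ) : ∀ (k : ℕ) (z : Fin k → X),
    ff ω k z = ∏ a : X, ∏ t ∈ Finset.range (cnt' z a), (ω a - t)
  | 0, z => by simp [ff, cnt']
  | (k+1), z => by
    have IH := ff_eq_prod' ω k (fun i => z i.castSucc)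
    rw [ffsucc', IH]
    have hsum : (∑ i : Fin k, if z i.castSucc = z (Fin.last k) then (1:ℝ) else 0)
        = (cnt' (fun i => z i.castSucc) (z (Fin.last k)) : ℝ) := by
      rw [cnt'_eq_sum]; push_cast; rfl
    rw [hsum]
    have key : ∀ a : X, (∏ t ∈ Finset.range (cnt' z a), (ω a - t))
        = (∏ t ∈ Finset.range (cnt' (fun i => z i.castSucc) a), (ω a - t)) *
          (if z (Fin.last k) = a then (ω a - cnt' (fun i => z i.castSucc) a) else 1) := by
      intro a
      have hc : cnt' z a = cnt' (fun i => z i.castSucc) a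
          + (if z (Fin.last k) = a then 1 else 0) := by
        rw [cnt'_eq_sum, cnt'_eq_sum, Fin.sum_univ_castSucc]
      rw [hc]
      by_cases h : z (Fin.last k) = a
      · simp [h, Finset.prod_range_succ]
      · simp [h]
    rw [Finset.prod_congr rfl (fun a _ => key a), Finset.prod_mul_distrib,
      Finset.prod_ite_eq]
    simp

private lemma ff_congr_cnt' (ω : X → ℝ) {k : ℕ} {z₁ z₂ : Fin k → X}
    (h : ∀ a, cnt' z₁ a = cnt' z₂ a) : ff ω k z₁ = ff ω k z₂ := by
  rw [ff_eq_prod', ff_eq_prod']; simp [h]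

private lemma castSucc_succAbove_last' {n : ℕ} (j : Fin (n+1)) :
    (j.castSucc).succAbove (Fin.last n) = Fin.last (n+1) :=
  Fin.succAbove_ne_last_last (by simp [Fin.ext_iff]; omega)

private lemma lowering_aux' (ω : X → ℝ) (x : X) : ∀ (n : ℕ) (y : Fin (n+1) → X),
    ff (ω + diracMeas x) (n+1) y - ff ω (n+1) y
      = ∑ j : Fin (n+1), (if y j = x then (1:ℝ) else 0) * ff ω n (fun i => y (j.succAbove i))
  | 0, y => by
      simp [ff, diracMeas]
      by_cases h : y 0 = x <;> simp [Finset.filter_singleton, h]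
  | (n+1), y => by
      have IH : ff (ω + diracMeas x) (n+1) (fun i => y i.castSucc)
            - ff ω (n+1) (fun i => y i.castSucc)
          = ∑ j : Fin (n+1), (if y j.castSucc = x then (1:ℝ) else 0) *
              ff ω n (fun i => y ((j.succAbove i).castSucc)) := by
        simpa using lowering_aux' ω x n (fun i => y i.castSucc)
      rw [Fin.sum_univ_castSucc, ffsucc' (ω + diracMeas x), ffsucc' ω]
      have hterm : ∀ j : Fin (n+1),
          (if y j.castSucc = x then (1:ℝ) else 0) *
              ff ω (n+1) (fun i => y (j.castSucc.succAbove i))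
            = ((if y j.castSucc = x then (1:ℝ) else 0) *
                ff ω n (fun i => y ((j.succAbove i).castSucc))) *
                  ((ω (y (Fin.last (n+1))) + (if y (Fin.last (n+1)) = x then (1:ℝ) else 0))
                    - ∑ i : Fin (n+1),
                        if y i.castSucc = y (Fin.last (n+1)) then (1:ℝ) else 0) := by
        intro j
        by_cases hj : y j.castSucc = x
        · rw [if_pos hj, ffsucc']
          simp only [Fin.castSucc_succAbove_castSucc, castSucc_succAbove_last', one_mul]
          have hS : (∑ i : Fin (n+1), if y i.castSucc = y (Fin.last (n+1)) then (1:ℝ) else 0)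
              = (if y (Fin.last (n+1)) = x then (1:ℝ) else 0)
                + ∑ i : Fin n, if y ((j.succAbove i).castSucc) = y (Fin.last (n+1))
                    then (1:ℝ) else 0 := by
            rw [Fin.sum_univ_succAbove
              (fun i : Fin (n+1) => if y i.castSucc = y (Fin.last (n+1)) then (1:ℝ) else 0) j]
            congr 1
            simp [hj, eq_comm]
          rw [hS]; ring
        · simp [hj]
      rw [Finset.sum_congr rfl (fun j _ => hterm j), ← Finset.sum_mul, ← IH]
      simp only [Fin.succAbove_last, castSucc_succAbove_last']
      simp only [Pi.add_apply, diracMeas]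
      ring

private lemma hcnt' {m : ℕ} (y : Fin (m+1) → X) (π : Equiv.Perm (Fin (m+1))) (a : X) :
    cnt' (fun j => y (π j.succ)) a = cnt' (fun i => y ((π 0).succAbove i)) a := by
  rw [cnt'_eq_sum, cnt'_eq_sum]
  have h2 : ∑ i : Fin (m+1), (if y (π i) = a then 1 else 0)
      = ∑ i : Fin (m+1), (if y i = a then 1 else 0) :=
    Equiv.sum_comp π (fun i => if y i = a then 1 else 0)
  rw [Fin.sum_univ_succ] at h2
  rw [Fin.sum_univ_succAbove (fun i : Fin (m+1) => if y i = a then 1 else 0) (π 0)] at h2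
  omega

private lemma hF' {m : ℕ} (x : X) (ω : X → ℝ) (hc : 1 + m = m + 1) (z : Fin (m+1) → X) :
    castFun hc (tensFun (fun y1 : Fin 1 → X => if y1 0 = x then (1:ℝ) else 0) (ff ω m)) z
      = (if z 0 = x then (1:ℝ) else 0) * ff ω m (fun j => z j.succ) := by
  simp only [castFun, tensFun]
  have h2 : (fun j : Fin m => z (Fin.cast hc (Fin.natAdd 1 j))) = fun j => z j.succ := by
    funext j; congr 1; exact Fin.ext (Nat.add_comm 1 j.val)
  rw [h2]
  rfl

private lemma perm_sum' {m : ℕ} (x : X) (ω : X → ℝ) (y : Fin (m+1) → X) :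
    (∑ π : Equiv.Perm (Fin (m+1)),
        (if y (π 0) = x then (1:ℝ) else 0) * ff ω m (fun i => y ((π 0).succAbove i)))
      = (m.factorial : ℝ) *
          ∑ p : Fin (m+1), (if y p = x then (1:ℝ) else 0) *
            ff ω m (fun i => y (p.succAbove i)) := by
  rw [← Equiv.sum_comp (Equiv.Perm.decomposeFin).symm
      (fun π : Equiv.Perm (Fin (m+1)) =>
        (if y (π 0) = x then (1:ℝ) else 0) * ff ω m (fun i => y ((π 0).succAbove i)))]
  rw [Fintype.sum_prod_type]
  simp only [Equiv.Perm.decomposeFin_symm_apply_zero]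
  rw [Finset.mul_sum]
  refine Finset.sum_congr rfl fun p _ => ?_
  rw [Finset.sum_const, Finset.card_univ, Fintype.card_perm, Fintype.card_fin, nsmul_eq_mul]

end FFLowAux

/-- The lowering identity
`(ω+δ_x)_n − (ω)_n = n · Sym(δ_x ⊗ (ω)_{n−1})`. -/
theorem fallingFactorial_lowering
    {X : Type*} [Fintype X] [DecidableEq X] (ω : X → ℝ) (x : X) {n : ℕ} (hn : 1 ≤ n)
    (y : Fin n → X) :
    ff (ω + diracMeas x) n y - ff ω n y
      = (n : ℝ) *
          symmFun n (castFun (by omega : 1 + (n - 1) = n)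
            (tensFun (fun y1 : Fin 1 → X => if y1 0 = x then (1 : ℝ) else 0)
              (ff ω (n - 1)))) y := by
  obtain ⟨m, rfl⟩ : ∃ m, n = m + 1 := ⟨n - 1, by omega⟩
  show ff (ω + diracMeas x) (m+1) y - ff ω (m+1) y
      = ((m+1 : ℕ) : ℝ) *
          symmFun (m+1) (castFun (by omega : 1 + m = m + 1)
            (tensFun (fun y1 : Fin 1 → X => if y1 0 = x then (1 : ℝ) else 0)
              (ff ω m))) y
  rw [lowering_aux' ω x m y, symmFun]
  have hre : ∀ π : Equiv.Perm (Fin (m+1)),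
      castFun (by omega : 1 + m = m + 1)
          (tensFun (fun y1 : Fin 1 → X => if y1 0 = x then (1:ℝ) else 0) (ff ω m)) (y ∘ π)
        = (if y (π 0) = x then (1:ℝ) else 0) * ff ω m (fun i => y ((π 0).succAbove i)) := by
    intro π
    rw [hF' x ω _ (y ∘ π)]
    simp only [Function.comp_apply]
    rw [ff_congr_cnt' ω (fun a => hcnt' y π a)]
  rw [Finset.sum_congr rfl (fun π _ => hre π), perm_sum']
  rw [Nat.factorial_succ]
  have hm : (m.factorial : ℝ) ≠ 0 := Nat.cast_ne_zero.mpr m.factorial_ne_zero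
  push_cast
  field_simp
end

section
/- Let ω be a finitely supported signed measure on X and ξ : X → ℝ a function. Then for all n ≥ 0, the recurrence ⟨(ω)_{n+1}, ξ^{⊗(n+1)}⟩ = ⟨(ω)_n, ξ^{⊗n}⟩·⟨ω, ξ⟩ − n·⟨(ω)_n, ξ² ⊙ ξ^{⊗(n−1)}⟩ holds, where ⟨μ, f⟩ denotes the integral of f against μ. -/
open Finset

lemma sum_perm_apply' {n : ℕ} (g : Fin n → ℝ) (k l : Fin n) :
    ∑ π : Equiv.Perm (Fin n), g (π k) = ∑ π : Equiv.Perm (Fin n), g (π l) := by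
  refine Fintype.sum_bijective (fun π => π * Equiv.swap k l)
    (Group.mulRight_bijective _) _ _ fun π => ?_
  simp [Equiv.Perm.mul_apply]

lemma sum_perm_zero' {n : ℕ} (g : Fin (n+1) → ℝ) (k : Fin (n+1)) :
    ((n+1 : ℕ) : ℝ) * ∑ π : Equiv.Perm (Fin (n+1)), g (π k)
      = (((n+1).factorial : ℕ) : ℝ) * ∑ j, g j := by
  have h1 : ∑ j : Fin (n+1), ∑ π : Equiv.Perm (Fin (n+1)), g (π j)
      = ((n+1 : ℕ) : ℝ) * ∑ π : Equiv.Perm (Fin (n+1)), g (π k) := by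
    rw [Finset.sum_congr rfl (fun j _ => sum_perm_apply' g j k), Finset.sum_const,
      Finset.card_univ, Fintype.card_fin, nsmul_eq_mul]
  have h2 : ∑ π : Equiv.Perm (Fin (n+1)), ∑ j, g (π j)
      = (((n+1).factorial : ℕ) : ℝ) * ∑ j, g j := by
    rw [Finset.sum_congr rfl (fun π _ => Equiv.sum_comp π g), Finset.sum_const,
      Finset.card_univ, Fintype.card_perm, Fintype.card_fin, nsmul_eq_mul]
  rw [← h1, ← h2, Finset.sum_comm]

/-- Recurrence for the falling factorials:
`⟨(ω)_{n+1}, ξ^{⊗(n+1)}⟩ = ⟨(ω)_n, ξ^{⊗n}⟩·⟨ω, ξ⟩ − n·⟨(ω)_n, ξ² ⊙ ξ^{⊗(n−1)}⟩`. -/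
theorem fallingFactorial_recurrence
    {X : Type*} [Fintype X] [DecidableEq X] (ω ξ : X → ℝ) (n : ℕ) :
    pairing (n + 1) (ff ω (n + 1)) (fun y => ∏ i, ξ (y i))
      = pairing n (ff ω n) (fun y => ∏ i, ξ (y i)) * (∑ a, ω a * ξ a)
        - (n : ℝ) *
            pairing n (ff ω n)
              (symmFun n (fun y => if h : 0 < n then ξ (y ⟨0, h⟩) * ∏ i, ξ (y i) else 0)) := by
  classical
  have hsplit : pairing (n + 1) (ff ω (n + 1)) (fun y => ∏ i, ξ (y i))
      = ∑ z : Fin n → X,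
          (ff ω n z * (∏ i, ξ (z i)) * (∑ a, ω a * ξ a)
            - ff ω n z * (∏ i, ξ (z i)) * (∑ i, ξ (z i))) := by
    rw [pairing, ← Equiv.sum_comp (Fin.snocEquiv (fun _ => X)), Fintype.sum_prod_type,
      Finset.sum_comm]
    refine Finset.sum_congr rfl fun z _ => ?_
    simp only [Fin.snocEquiv_apply, ff, Fin.snoc_castSucc, Fin.snoc_last,
      Fin.prod_univ_castSucc]
    have key : ∀ a : X,
        ff ω n z * (ω a - ∑ i : Fin n, if z i = a then (1:ℝ) else 0)
            * ((∏ i, ξ (z i)) * ξ a)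
          = ff ω n z * (∏ i, ξ (z i)) * (ω a * ξ a)
            - ∑ i : Fin n, (if z i = a then ff ω n z * (∏ j, ξ (z j)) * ξ a else 0) := by
      intro a
      have h2 : ∑ i : Fin n, (if z i = a then ff ω n z * (∏ j, ξ (z j)) * ξ a else 0)
          = (∑ i : Fin n, if z i = a then (1:ℝ) else 0)
              * (ff ω n z * (∏ j, ξ (z j)) * ξ a) := by
        rw [Finset.sum_mul]
        refine Finset.sum_congr rfl fun i _ => ?_
        split <;> ring
      rw [h2]
      ring
    rw [Finset.sum_congr rfl fun a _ => key a, Finset.sum_sub_distrib, ← Finset.mul_sum,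
      Finset.sum_comm]
    congr 1
    rw [Finset.mul_sum]
    refine Finset.sum_congr rfl fun i _ => ?_
    rw [Finset.sum_ite_eq univ (z i) (fun a => ff ω n z * (∏ j, ξ (z j)) * ξ a)]
    simp
  have hsym : ∑ z : Fin n → X, ff ω n z * (∏ i, ξ (z i)) * (∑ i, ξ (z i))
      = (n : ℝ) * pairing n (ff ω n)
          (symmFun n (fun y => if h : 0 < n then ξ (y ⟨0, h⟩) * ∏ i, ξ (y i) else 0)) := by
    cases n with
    | zero => simp
    | succ m =>
      rw [pairing, Finset.mul_sum]
      refine Finset.sum_congr rfl fun z _ => ?_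
      have hσ : symmFun (m+1)
            (fun y => if h : 0 < m+1 then ξ (y ⟨0, h⟩) * ∏ i, ξ (y i) else 0) z
          = ((∑ π : Equiv.Perm (Fin (m+1)), ξ (z (π ⟨0, Nat.succ_pos m⟩)))
              * ∏ i, ξ (z i)) / (m+1).factorial := by
        rw [symmFun]
        congr 1
        have h3 : ∀ π : Equiv.Perm (Fin (m+1)),
            (if h : 0 < m+1 then ξ ((z ∘ π) ⟨0, h⟩) * ∏ i, ξ ((z ∘ π) i) else 0)
              = ξ (z (π ⟨0, Nat.succ_pos m⟩)) * ∏ i, ξ (z i) := by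
          intro π
          rw [dif_pos (Nat.succ_pos m)]
          simp only [Function.comp_apply]
          rw [Equiv.prod_comp π (fun i => ξ (z i))]
        rw [Finset.sum_congr rfl fun π _ => h3 π, ← Finset.sum_mul]
      rw [hσ]
      have hk := sum_perm_zero' (fun j => ξ (z j)) ⟨0, Nat.succ_pos m⟩
      have hfac : ((m+1).factorial : ℝ) ≠ 0 := by
        exact_mod_cast Nat.factorial_ne_zero (m+1)
      simp only [Fin.mk_zero] at hk ⊢
      field_simp
      push_cast at hk ⊢
      linear_combination (-(ff ω (m+1) z * ∏ i, ξ (z i))) * hk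
  rw [hsplit, Finset.sum_sub_distrib, ← Finset.sum_mul, hsym]
  simp only [pairing]
end

section
/- Let ω be a finitely supported signed measure on X and ξ : X → ℝ a function. Then as formal power series in a parameter t (or for ξ with ⟨|ω|, |log(1+tξ)|⟩ finite), Σ_{n=0}^{∞} (tⁿ/n!)·⟨(ω)_n, ξ^{⊗n}⟩ = exp(⟨ω, log(1+tξ)⟩), i.e., the coefficient of tⁿ on both sides agree for every n. -/
open Finset

/-- The formal power series `⟨ω, log(1+tξ)⟩ = Σ_{m≥1} tᵐ Σ_x ω(x)·(−1)^{m−1} ξ(x)ᵐ/m`. -/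
noncomputable def logPairingSeries {X : Type*} [Fintype X] (ω ξ : X → ℝ) : PowerSeries ℝ :=
  PowerSeries.mk fun m => if m = 0 then 0 else ∑ x, ω x * ((-1 : ℝ) ^ (m - 1) * ξ x ^ m / m)


section AuxSeries

open PowerSeries

private lemma triangle_sum (N : ℕ) (g : ℕ → ℕ → ℝ) (hg : ∀ j i, N ≤ j + i → g j i = 0) :
    ∑ k ∈ Finset.range N, ∑ j ∈ Finset.range (k + 1), g j (k - j)
      = ∑ j ∈ Finset.range N, ∑ i ∈ Finset.range N, g j i := by
  have hcomm := Finset.sum_Ico_Ico_comm 0 N (fun j k => g j (k - j))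
  simp only [Nat.Ico_zero_eq_range] at hcomm
  rw [← hcomm]
  apply Finset.sum_congr rfl
  intro j hj
  rw [Finset.sum_Ico_eq_sum_range]
  have hstep : ∀ i, g j (j + i - j) = g j i := fun i => by rw [Nat.add_sub_cancel_left]
  rw [Finset.sum_congr rfl fun i _ => hstep i]
  apply Finset.sum_subset
  · apply Finset.range_subset_range.mpr; omega
  · intro i _ hi
    simp only [Finset.mem_range, not_lt] at hi
    exact hg j i (by simp only [Finset.mem_range] at hj; omega)

/-- The exponential-coefficient sequence of a power series. -/
noncomputable def Eseq (F : PowerSeries ℝ) (n : ℕ) : ℝ :=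
  ∑ k ∈ Finset.range (n + 1), PowerSeries.coeff n (F ^ k) / (k.factorial : ℝ)

private lemma coeff_pow_zero (F : PowerSeries ℝ) (h : constantCoeff F = 0) {k n : ℕ}
    (hn : n < k) : coeff n (F ^ k) = 0 := by
  have hX : (X : PowerSeries ℝ) ∣ F := X_dvd_iff.mpr h
  obtain ⟨Q, hQ⟩ := pow_dvd_pow_of_dvd hX k
  rw [hQ, coeff_X_pow_mul']
  simp [Nat.not_le.mpr hn]

private lemma Eseq_zero (F : PowerSeries ℝ) : Eseq F 0 = 1 := by
  simp [Eseq]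

private lemma Eseq_ext (F : PowerSeries ℝ) (h : constantCoeff F = 0) {n m : ℕ} (hm : n < m) :
    Eseq F n = ∑ k ∈ Finset.range m, coeff n (F ^ k) / (k.factorial : ℝ) := by
  apply Finset.sum_subset (Finset.range_subset_range.mpr hm)
  intro k _ hk
  rw [coeff_pow_zero F h (by simpa using hk)]
  simp

private lemma Eseq_rec (F : PowerSeries ℝ) (h : constantCoeff F = 0) (n : ℕ) :
    ((n : ℝ) + 1) * Eseq F (n + 1)
      = ∑ m ∈ Finset.range (n + 1), (coeff (m + 1) F * ((m : ℝ) + 1)) * Eseq F (n - m) := by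
  have key : ∀ (k : ℕ), ((n : ℝ) + 1) * coeff (n + 1) (F ^ (k + 1))
      = ((k : ℝ) + 1) * ∑ p ∈ Finset.HasAntidiagonal.antidiagonal n,
          coeff p.1 (F ^ k) * (coeff (p.2 + 1) F * ((p.2 : ℝ) + 1)) := by
    intro k
    have hd : derivative ℝ (F ^ (k + 1)) = (k + 1) • F ^ k • derivative ℝ F :=
      Derivation.leibniz_pow _ _ _
    calc ((n : ℝ) + 1) * coeff (n + 1) (F ^ (k + 1))
        = coeff n (derivative ℝ (F ^ (k + 1))) := by rw [coeff_derivative]; ring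
      _ = coeff n ((k + 1) • (F ^ k • derivative ℝ F)) := by rw [hd]
      _ = ((k : ℝ) + 1) * ∑ p ∈ Finset.HasAntidiagonal.antidiagonal n,
            coeff p.1 (F ^ k) * coeff p.2 (derivative ℝ F) := by
          rw [map_nsmul, nsmul_eq_mul, smul_eq_mul, coeff_mul]; push_cast; ring
      _ = _ := by
          congr 1
          exact Finset.sum_congr rfl fun p _ => by rw [coeff_derivative]
  have h1 : ((n : ℝ) + 1) * Eseq F (n + 1)
      = ∑ k ∈ Finset.range (n + 1),
          (((n : ℝ) + 1) * coeff (n + 1) (F ^ (k + 1))) / ((k + 1).factorial : ℝ) := by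
    rw [Eseq_ext F h (Nat.lt_succ_self (n + 1)), Finset.mul_sum, Finset.sum_range_succ']
    simp [mul_div_assoc]
  rw [h1]
  have h2 : ∀ k ∈ Finset.range (n + 1),
      (((n : ℝ) + 1) * coeff (n + 1) (F ^ (k + 1))) / ((k + 1).factorial : ℝ)
      = ∑ p ∈ Finset.HasAntidiagonal.antidiagonal n,
          (coeff p.1 (F ^ k) / (k.factorial : ℝ)) * (coeff (p.2 + 1) F * ((p.2 : ℝ) + 1)) := by
    intro k _
    have hk : ((k : ℝ) + 1) ≠ 0 := by positivity
    rw [key k, Nat.factorial_succ]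
    push_cast
    rw [mul_div_mul_left _ _ hk, Finset.sum_div]
    exact Finset.sum_congr rfl fun p _ => by ring
  rw [Finset.sum_congr rfl h2, Finset.sum_comm]
  rw [← Finset.Nat.sum_antidiagonal_swap]
  rw [Finset.Nat.sum_antidiagonal_eq_sum_range_succ_mk]
  apply Finset.sum_congr rfl
  intro m hm
  simp only [Prod.fst_swap, Prod.snd_swap]
  rw [← Finset.sum_mul, ← Eseq_ext F h (show n - m < n + 1 by omega)]
  ring

private lemma Eseq_add (F G : PowerSeries ℝ) (hF : constantCoeff F = 0)
    (hG : constantCoeff G = 0) (n : ℕ) :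
    Eseq (F + G) n = ∑ p ∈ Finset.HasAntidiagonal.antidiagonal n, Eseq F p.1 * Eseq G p.2 := by
  set g : ℕ → ℕ → ℝ := fun j i =>
    ∑ p ∈ Finset.HasAntidiagonal.antidiagonal n,
      (coeff p.1 (F ^ j) / (j.factorial : ℝ)) * (coeff p.2 (G ^ i) / (i.factorial : ℝ))
    with hg_def
  have hg0 : ∀ j i, n + 1 ≤ j + i → g j i = 0 := by
    intro j i hji
    apply Finset.sum_eq_zero
    intro p hp
    rw [Finset.HasAntidiagonal.mem_antidiagonal] at hp
    rcases lt_or_ge p.1 j with h1 | h1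
    · rw [coeff_pow_zero F hF h1]; ring
    · have h2 : p.2 < i := by omega
      rw [coeff_pow_zero G hG h2]; ring
  have hL : Eseq (F + G) n
      = ∑ k ∈ Finset.range (n + 1), ∑ j ∈ Finset.range (k + 1), g j (k - j) := by
    apply Finset.sum_congr rfl
    intro k hk
    rw [add_pow, map_sum, Finset.sum_div, Finset.sum_congr rfl]
    intro j hj
    rw [Finset.mem_range, Nat.lt_succ_iff] at hj
    have hc : coeff n (F ^ j * G ^ (k - j) * (k.choose j : ℝ⟦X⟧))
        = (k.choose j : ℝ) * coeff n (F ^ j * G ^ (k - j)) := by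
      rw [mul_comm, ← nsmul_eq_mul, map_nsmul, nsmul_eq_mul]
    rw [hc, coeff_mul, hg_def, Finset.mul_sum, Finset.sum_div]
    apply Finset.sum_congr rfl
    intro p _
    have hfact : (k.factorial : ℝ)
        = (k.choose j : ℝ) * (j.factorial : ℝ) * ((k - j).factorial : ℝ) := by
      rw [← Nat.cast_mul, ← Nat.cast_mul, Nat.choose_mul_factorial_mul_factorial hj]
    have h1 : (j.factorial : ℝ) ≠ 0 := Nat.cast_ne_zero.mpr (Nat.factorial_ne_zero j)
    have h2 : ((k - j).factorial : ℝ) ≠ 0 := Nat.cast_ne_zero.mpr (Nat.factorial_ne_zero _)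
    have h3 : (k.choose j : ℝ) ≠ 0 := (Nat.cast_pos.mpr (Nat.choose_pos hj)).ne'
    rw [hfact]
    field_simp
  rw [hL, triangle_sum (n + 1) g hg0, hg_def]
  have hswap : ∀ j ∈ Finset.range (n + 1),
      (∑ i ∈ Finset.range (n + 1), ∑ p ∈ Finset.HasAntidiagonal.antidiagonal n,
        (coeff p.1 (F ^ j) / (j.factorial : ℝ)) * (coeff p.2 (G ^ i) / (i.factorial : ℝ)))
      = ∑ p ∈ Finset.HasAntidiagonal.antidiagonal n, ∑ i ∈ Finset.range (n + 1),
        (coeff p.1 (F ^ j) / (j.factorial : ℝ)) * (coeff p.2 (G ^ i) / (i.factorial : ℝ)) :=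
    fun j _ => Finset.sum_comm
  rw [Finset.sum_congr rfl hswap, Finset.sum_comm]
  apply Finset.sum_congr rfl
  intro p hp
  rw [Finset.HasAntidiagonal.mem_antidiagonal] at hp
  rw [Eseq_ext F hF (show p.1 < n + 1 by omega), Eseq_ext G hG (show p.2 < n + 1 by omega),
    Finset.sum_mul_sum]

end AuxSeries

section AuxMain

open PowerSeries

variable {X : Type*} [Fintype X] [DecidableEq X]

omit [DecidableEq X] in
private lemma lps_const (ω ξ : X → ℝ) : constantCoeff (logPairingSeries ω ξ) = 0 := by
  rw [← coeff_zero_eq_constantCoeff]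
  simp [logPairingSeries]

omit [DecidableEq X] in
private lemma lps_coeff_succ (ω ξ : X → ℝ) (m : ℕ) :
    coeff (m + 1) (logPairingSeries ω ξ) * ((m : ℝ) + 1)
      = ∑ x, ω x * ξ x * (-ξ x) ^ m := by
  have hm : ((m : ℝ) + 1) ≠ 0 := by positivity
  rw [logPairingSeries, coeff_mk, if_neg (Nat.succ_ne_zero m), Finset.sum_mul]
  apply Finset.sum_congr rfl
  intro x _
  rw [Nat.add_sub_cancel, neg_pow]
  push_cast
  field_simp
  ring

private lemma lps_sub (ω ξ : X → ℝ) (x : X) :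
    logPairingSeries (fun a => ω a - diracMeas x a) ξ
      = logPairingSeries ω ξ + (-(logPairingSeries (diracMeas x) ξ)) := by
  ext m
  simp only [map_add, map_neg, logPairingSeries, coeff_mk]
  split_ifs with h
  · ring
  · rw [← Finset.sum_neg_distrib, ← Finset.sum_add_distrib]
    apply Finset.sum_congr rfl
    intro a _
    ring

omit [DecidableEq X] in
private lemma neg_lps_const (ω ξ : X → ℝ) :
    constantCoeff (-(logPairingSeries ω ξ)) = 0 := by
  rw [map_neg, lps_const, neg_zero]

private lemma Eseq_dirac (ξ : X → ℝ) (x : X) (n : ℕ) :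
    Eseq (-(logPairingSeries (diracMeas x) ξ)) n = (-ξ x) ^ n := by
  induction n using Nat.strong_induction_on with
  | _ n ih =>
    match n with
    | 0 => rw [Eseq_zero, pow_zero]
    | n + 1 =>
      have hc : ((n : ℝ) + 1) ≠ 0 := by positivity
      have h1 := Eseq_rec _ (neg_lps_const (diracMeas x) ξ) n
      have h2 : ∀ m ∈ Finset.range (n + 1),
          (coeff (m + 1) (-(logPairingSeries (diracMeas x) ξ)) * ((m : ℝ) + 1))
            * Eseq (-(logPairingSeries (diracMeas x) ξ)) (n - m)
          = (-ξ x) ^ (n + 1) := by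
        intro m hm
        rw [Finset.mem_range] at hm
        rw [ih (n - m) (by omega), map_neg, neg_mul, lps_coeff_succ]
        have hsum : ∑ a, diracMeas x a * ξ a * (-ξ a) ^ m = ξ x * (-ξ x) ^ m := by
          rw [Finset.sum_eq_single x]
          · simp [diracMeas]
          · intro b _ hb; simp [diracMeas, hb]
          · intro h; exact absurd (Finset.mem_univ x) h
        rw [hsum]
        have hpow : -(ξ x * (-ξ x) ^ m) = (-ξ x) ^ (m + 1) := by rw [pow_succ]; ring
        rw [hpow, ← pow_add]
        congr 1
        omega
      rw [Finset.sum_congr rfl h2, Finset.sum_const, Finset.card_range] at h1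
      have h3 : ((n : ℝ) + 1) * Eseq (-(logPairingSeries (diracMeas x) ξ)) (n + 1)
          = ((n : ℝ) + 1) * (-ξ x) ^ (n + 1) := by
        rw [h1, nsmul_eq_mul]; push_cast; ring
      exact mul_left_cancel₀ hc h3

private lemma Eseq_step (ω ξ : X → ℝ) (n : ℕ) :
    ((n : ℝ) + 1) * Eseq (logPairingSeries ω ξ) (n + 1)
      = ∑ x, ω x * ξ x * Eseq (logPairingSeries (fun a => ω a - diracMeas x a) ξ) n := by
  have hR : ∀ x : X, Eseq (logPairingSeries (fun a => ω a - diracMeas x a) ξ) n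
      = ∑ p ∈ Finset.HasAntidiagonal.antidiagonal n, Eseq (logPairingSeries ω ξ) p.1 * (-ξ x) ^ p.2 := by
    intro x
    rw [lps_sub, Eseq_add _ _ (lps_const ω ξ) (neg_lps_const _ ξ)]
    exact Finset.sum_congr rfl fun p _ => by rw [Eseq_dirac]
  calc ((n : ℝ) + 1) * Eseq (logPairingSeries ω ξ) (n + 1)
      = ∑ m ∈ Finset.range (n + 1),
          (∑ x, ω x * ξ x * (-ξ x) ^ m) * Eseq (logPairingSeries ω ξ) (n - m) := by
        rw [Eseq_rec _ (lps_const ω ξ) n]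
        exact Finset.sum_congr rfl fun m _ => by rw [lps_coeff_succ]
    _ = ∑ m ∈ Finset.range (n + 1), ∑ x,
          Eseq (logPairingSeries ω ξ) (n - m) * (ω x * ξ x * (-ξ x) ^ m) := by
        exact Finset.sum_congr rfl fun m _ => by
          rw [Finset.sum_mul]
          exact Finset.sum_congr rfl fun x _ => by ring
    _ = ∑ x, ∑ m ∈ Finset.range (n + 1),
          Eseq (logPairingSeries ω ξ) (n - m) * (ω x * ξ x * (-ξ x) ^ m) := Finset.sum_comm
    _ = ∑ x, ω x * ξ x * Eseq (logPairingSeries (fun a => ω a - diracMeas x a) ξ) n := by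
        apply Finset.sum_congr rfl
        intro x _
        rw [hR x, ← Finset.Nat.sum_antidiagonal_swap,
          Finset.Nat.sum_antidiagonal_eq_sum_range_succ_mk, Finset.mul_sum]
        exact Finset.sum_congr rfl fun m _ => by
          simp only [Prod.fst_swap, Prod.snd_swap]; ring

omit [Fintype X] in
private lemma ff_cons (n : ℕ) (ω : X → ℝ) (x : X) (z : Fin n → X) :
    ff ω (n + 1) (Fin.cons x z) = ω x * ff (fun a => ω a - diracMeas x a) n z := by
  induction n generalizing ω with
  | zero =>
    show ff ω 0 _ * _ = _
    have h00 : Fin.last 0 = (0 : Fin 1) := rfl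
    rw [h00]
    simp [ff]
  | succ n ih =>
    have hcast : (fun i : Fin (n + 1) => (Fin.cons x z : Fin (n + 1 + 1) → X) i.castSucc)
        = (Fin.cons x (fun i => z i.castSucc) : Fin (n + 1) → X) := by
      funext i
      induction i using Fin.cases with
      | zero => rfl
      | succ j => rw [← Fin.succ_castSucc, Fin.cons_succ, Fin.cons_succ]
    have hlast : (Fin.cons x z : Fin (n + 1 + 1) → X) (Fin.last (n + 1)) = z (Fin.last n) := by
      rw [← Fin.succ_last, Fin.cons_succ]
    show ff ω (n + 1) _ * _ = ω x * (ff _ n _ * _)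
    rw [hcast, hlast, ih ω, Fin.sum_univ_succ]
    simp only [Fin.cons_succ, ← Fin.succ_castSucc]
    have h0 : (Fin.cons x z : Fin (n + 1 + 1) → X) ((0 : Fin (n + 1)).castSucc) = x := rfl
    rw [h0]
    have hd : diracMeas x (z (Fin.last n)) = if x = z (Fin.last n) then (1 : ℝ) else 0 := by
      simp [diracMeas, eq_comm]
    rw [hd]
    ring

private lemma pairing_peel (n : ℕ) (ω ξ : X → ℝ) :
    pairing (n + 1) (ff ω (n + 1)) (fun y => ∏ i, ξ (y i))
      = ∑ x, ω x * ξ x *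
          pairing n (ff (fun a => ω a - diracMeas x a) n) (fun y => ∏ i, ξ (y i)) := by
  rw [pairing]
  rw [← Equiv.sum_comp (Fin.consEquiv (fun _ : Fin (n + 1) => X))
    (fun y : Fin (n + 1) → X => ff ω (n + 1) y * ∏ i, ξ (y i))]
  rw [Fintype.sum_prod_type]
  apply Finset.sum_congr rfl
  intro x _
  rw [pairing, Finset.mul_sum]
  apply Finset.sum_congr rfl
  intro z _
  have he : (Fin.consEquiv (fun _ : Fin (n + 1) => X)) (x, z) = Fin.cons x z := rfl
  rw [he, ff_cons, Fin.prod_univ_succ]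
  simp only [Fin.cons_zero, Fin.cons_succ]
  ring

end AuxMain

/-- As formal power series in `t`,
`Σ_{n≥0} (tⁿ/n!)·⟨(ω)_n, ξ^{⊗n}⟩ = exp(⟨ω, log(1+tξ)⟩)`, i.e. the coefficients of `tⁿ`
agree for every `n`.  Since `⟨ω, log(1+tξ)⟩` has zero constant term, the `n`-th
coefficient of its exponential `Σ_k F^k/k!` is `Σ_{k=0}^{n} (coeff n of F^k)/k!`. -/
theorem fallingFactorial_generatingFunction
    {X : Type*} [Fintype X] [DecidableEq X] (ω ξ : X → ℝ) (n : ℕ) :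
    (1 / (n.factorial : ℝ)) * pairing n (ff ω n) (fun y => ∏ i, ξ (y i))
      = ∑ k ∈ Finset.range (n + 1),
          (PowerSeries.coeff n ((logPairingSeries ω ξ) ^ k)) / (k.factorial : ℝ) := by
  have main : ∀ (n : ℕ) (ω : X → ℝ),
      pairing n (ff ω n) (fun y => ∏ i, ξ (y i))
        = (n.factorial : ℝ) * Eseq (logPairingSeries ω ξ) n := by
    intro n
    induction n using Nat.strong_induction_on with
    | _ n ih =>
      match n with
      | 0 =>
        intro ω
        rw [Eseq_zero]
        simp [pairing, ff]
      | n + 1 =>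
        intro ω
        rw [pairing_peel, Nat.factorial_succ]
        calc ∑ x, ω x * ξ x *
              pairing n (ff (fun a => ω a - diracMeas x a) n) (fun y => ∏ i, ξ (y i))
            = ∑ x, ω x * ξ x * ((n.factorial : ℝ)
                * Eseq (logPairingSeries (fun a => ω a - diracMeas x a) ξ) n) := by
              exact Finset.sum_congr rfl fun x _ => by
                rw [ih n (Nat.lt_succ_self n) (fun a => ω a - diracMeas x a)]
          _ = (n.factorial : ℝ) * ∑ x, ω x * ξ x
                * Eseq (logPairingSeries (fun a => ω a - diracMeas x a) ξ) n := by
              rw [Finset.mul_sum]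
              exact Finset.sum_congr rfl fun x _ => by ring
          _ = (n.factorial : ℝ)
                * (((n : ℝ) + 1) * Eseq (logPairingSeries ω ξ) (n + 1)) := by
              rw [← Eseq_step]
          _ = (((n + 1) * n.factorial : ℕ) : ℝ) * Eseq (logPairingSeries ω ξ) (n + 1) := by
              push_cast
              ring
  have hfac : ((n.factorial : ℝ)) ≠ 0 := Nat.cast_ne_zero.mpr (Nat.factorial_ne_zero n)
  have hrhs : (∑ k ∈ Finset.range (n + 1),
      (PowerSeries.coeff n ((logPairingSeries ω ξ) ^ k)) / (k.factorial : ℝ))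
      = Eseq (logPairingSeries ω ξ) n := rfl
  rw [main n ω, hrhs]
  field_simp
end

section
/- Define, for a finite set X and k ≤ n, the Stirling operator of the second kind S(n,k) acting on symmetric functions f : X^n → ℝ by (S(n,k)f)(x₁,…,x_k) = Σ_{λ ∈ UP(n,k)} (D_λ f)(x₁,…,x_k), where the sum is over unordered partitions λ = {λ₁,…,λ_k} of {1,…,n} into k nonempty blocks and D_λ f is the symmetrization in (y₁,…,y_k) of the function obtained from f by substituting y_i for each variable x_j with j ∈ λ_i. Then for every finitely supported signed measure ω on X and every symmetric f : X^n → ℝ, ⟨ω^{⊗n}, f⟩ = Σ_{k=1}^{n} ⟨(ω)_k, S(n,k)f⟩. -/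
open Finset

namespace StirAux

variable {X : Type*} [Fintype X] [DecidableEq X]

noncomputable def fallF (t : ℝ) (m : ℕ) : ℝ := ∏ j ∈ Finset.range m, (t - j)

lemma ff_succ (ω : X → ℝ) {k : ℕ} (y : Fin (k+1) → X) :
    ff ω (k+1) y = ff ω k (fun i => y i.castSucc) *
      (ω (y (Fin.last k)) - ∑ i : Fin k, if y i.castSucc = y (Fin.last k) then (1:ℝ) else 0) := rfl

lemma ff_snoc (ω : X → ℝ) {k : ℕ} (y : Fin k → X) (a : X) :
    ff ω (k+1) (Fin.snoc y a) = ff ω k y * (ω a - ∑ c : Fin k, if y c = a then (1:ℝ) else 0) := by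
  rw [ff_succ]
  simp

lemma fallF_succ (t : ℝ) (m : ℕ) : fallF t (m+1) = fallF t m * (t - m) := by
  rw [fallF, fallF, Finset.prod_range_succ]

lemma ff_eq (ω : X → ℝ) : ∀ (k : ℕ) (y : Fin k → X),
    ff ω k y = ∏ v : X, fallF (ω v) ((Finset.univ.filter (fun i => y i = v)).card)
  | 0, y => by simp [ff, fallF]
  | (k+1), y => by
    rw [ff_succ, ff_eq ω k]
    set v₀ := y (Fin.last k) with hv₀
    have hcard : ∀ v : X, (Finset.univ.filter (fun i : Fin (k+1) => y i = v)).card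
        = (Finset.univ.filter (fun i : Fin k => y i.castSucc = v)).card
          + (if v₀ = v then 1 else 0) := by
      intro v
      rw [Finset.card_filter, Finset.card_filter, Fin.sum_univ_castSucc]
    have hsum : (∑ i : Fin k, if y i.castSucc = v₀ then (1:ℝ) else 0)
        = ((Finset.univ.filter (fun i : Fin k => y i.castSucc = v₀)).card : ℝ) := by
      simp [Finset.sum_boole]
    rw [hsum]
    set m : X → ℕ := fun v => (Finset.univ.filter (fun i : Fin k => y i.castSucc = v)).card with hm
    have h1 : ∀ v : X, (Finset.univ.filter (fun i : Fin (k+1) => y i = v)).card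
        = m v + (if v₀ = v then 1 else 0) := hcard
    calc (∏ v : X, fallF (ω v) (m v)) * (ω v₀ - (m v₀ : ℝ))
        = (fallF (ω v₀) (m v₀) * (ω v₀ - (m v₀:ℝ))) * ∏ v ∈ Finset.univ.erase v₀, fallF (ω v) (m v) := by
          rw [← Finset.mul_prod_erase Finset.univ _ (Finset.mem_univ v₀)]; ring
      _ = fallF (ω v₀) (m v₀ + 1) * ∏ v ∈ Finset.univ.erase v₀, fallF (ω v) (m v + if v₀ = v then 1 else 0) := by
          rw [fallF_succ]
          congr 1
          refine Finset.prod_congr rfl fun v hv => ?_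
          rw [if_neg (Ne.symm (Finset.ne_of_mem_erase hv)), Nat.add_zero]
      _ = ∏ v : X, fallF (ω v) (m v + if v₀ = v then 1 else 0) := by
          rw [← Finset.mul_prod_erase Finset.univ _ (Finset.mem_univ v₀), if_pos rfl]
      _ = ∏ v : X, fallF (ω v) ((Finset.univ.filter (fun i : Fin (k+1) => y i = v)).card) := by
          refine Finset.prod_congr rfl fun v _ => ?_
          rw [h1 v]

lemma ff_comp (ω : X → ℝ) {k : ℕ} (σ : Fin k → Fin k) (hσ : Function.Bijective σ)
    (y : Fin k → X) : ff ω k (y ∘ σ) = ff ω k y := by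
  rw [ff_eq, ff_eq]
  refine Finset.prod_congr rfl fun v _ => ?_
  congr 1
  refine Finset.card_bij (fun i _ => σ i) ?_ ?_ ?_
  · intro i hi
    simpa using (by simpa using hi : y (σ i) = v)
  · intro i _ j _ h
    exact hσ.1 h
  · intro j hj
    obtain ⟨i, rfl⟩ := hσ.2 j
    exact ⟨i, by simpa using hj, rfl⟩

lemma sum_snoc {α : Type*} [Fintype α] {M : Type*} [AddCommMonoid M] {n : ℕ}
    (H : (Fin (n+1) → α) → M) :
    ∑ z : Fin (n+1) → α, H z = ∑ y : Fin n → α, ∑ a : α, H (Fin.snoc y a) := by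
  rw [← (Fin.snocEquiv (fun _ => α)).sum_comp H, Fintype.sum_prod_type]
  rw [Finset.sum_comm]
  rfl

lemma mem_surjs {n k : ℕ} {g : Fin n → Fin k} : g ∈ surjs n k ↔ Function.Surjective g := by
  simp [surjs]

lemma surjs_zero_empty {n : ℕ} (hn : 1 ≤ n) : surjs n 0 = ∅ := by
  ext g
  simp only [Finset.notMem_empty, iff_false]
  exact fun _ => (g ⟨0, hn⟩).elim0

lemma surjs_gt_empty {n k : ℕ} (h : n < k) : surjs n k = ∅ := by
  ext g
  simp only [mem_surjs, Finset.notMem_empty, iff_false]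
  intro hs
  have := Fintype.card_le_of_surjective g hs
  simp only [Fintype.card_fin] at this
  omega

lemma snoc_surj_of_surj {n k : ℕ} {g : Fin n → Fin (k+1)} (hg : Function.Surjective g)
    (c : Fin (k+1)) : Function.Surjective (Fin.snoc g c : Fin (n+1) → Fin (k+1)) := by
  intro i
  obtain ⟨j, hj⟩ := hg i
  exact ⟨j.castSucc, by simpa using hj⟩

lemma filter_snoc_surj {n k : ℕ} (c : Fin (k+1)) :
    (Finset.univ.filter fun g : Fin n → Fin (k+1) =>
        ¬ Function.Surjective g ∧ Function.Surjective (Fin.snoc g c : Fin (n+1) → Fin (k+1)))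
      = (surjs n k).image (fun h => c.succAbove ∘ h) := by
  ext g
  simp only [Finset.mem_filter, Finset.mem_univ, true_and, Finset.mem_image, mem_surjs]
  constructor
  · rintro ⟨hns, hsn⟩
    have hcnot : ∀ j, g j ≠ c := by
      intro j hj
      obtain ⟨i₀, hi₀⟩ := not_forall.mp fun hall => hns fun i => by
        obtain ⟨m, hm⟩ := (hall i : ∃ m, g m = i); exact ⟨m, hm⟩
      apply hi₀
      obtain ⟨m, hm⟩ := hsn i₀
      rcases Fin.lastCases (motive := fun m => (Fin.snoc g c : Fin (n+1) → Fin (k+1)) m = i₀ → ∃ m', g m' = i₀)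
        (fun hm => ⟨j, by rw [hj]; simpa using hm⟩)
        (fun m' hm => ⟨m', by simpa using hm⟩) m hm with ⟨m', hm'⟩
      exact ⟨m', hm'⟩
    choose h hh using fun j => Fin.exists_succAbove_eq (hcnot j)
    refine ⟨h, ?_, funext fun j => (hh j)⟩
    intro j'
    have hne : c.succAbove j' ≠ c := Fin.succAbove_ne c j'
    obtain ⟨m, hm⟩ := hsn (c.succAbove j')
    rcases Fin.lastCases (motive := fun m => (Fin.snoc g c : Fin (n+1) → Fin (k+1)) m = c.succAbove j' → ∃ m', g m' = c.succAbove j')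
      (fun hm => absurd (show (c : Fin (k+1)) = c.succAbove j' from by simpa using hm) (Fin.ne_succAbove c j'))
      (fun m' hm => ⟨m', by simpa using hm⟩) m hm with ⟨m', hm'⟩
    refine ⟨m', Fin.succAbove_right_injective (p := c) ?_⟩
    rw [hh m', hm']
  · rintro ⟨h, hh, rfl⟩
    constructor
    · intro hsurj
      obtain ⟨j, hj⟩ := hsurj c
      exact Fin.succAbove_ne c (h j) hj
    · intro i
      by_cases hic : i = c
      · exact ⟨Fin.last n, by simpa using hic.symm⟩
      · obtain ⟨j, hj⟩ := Fin.exists_succAbove_eq hic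
        obtain ⟨m, hm⟩ := hh j
        exact ⟨m.castSucc, by simp [hm, hj]⟩

lemma comp_succAbove_injective {n k : ℕ} (c : Fin (k+1)) :
    Function.Injective (fun h : Fin n → Fin k => c.succAbove ∘ h) := by
  intro h₁ h₂ hh
  funext j
  exact Fin.succAbove_right_injective (p := c) (congrFun hh j)

lemma sum_surjs_succ {M : Type*} [AddCommMonoid M] (n k : ℕ)
    (F : (Fin (n+1) → Fin (k+1)) → M) :
    ∑ g' ∈ surjs (n+1) (k+1), F g' =
      (∑ g ∈ surjs n (k+1), ∑ c : Fin (k+1), F (Fin.snoc g c)) +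
      (∑ c : Fin (k+1), ∑ h ∈ surjs n k, F (Fin.snoc (c.succAbove ∘ h) c)) := by
  classical
  rw [surjs, Finset.sum_filter]
  rw [sum_snoc (fun g' => if Function.Surjective g' then F g' else 0)]
  rw [← Finset.sum_filter_add_sum_filter_not Finset.univ (fun g => Function.Surjective g)]
  congr 1
  · rw [surjs, Finset.sum_filter, Finset.sum_filter]
    refine Finset.sum_congr rfl fun g _ => ?_
    by_cases hg : Function.Surjective g
    · simp only [if_pos hg]
      refine Finset.sum_congr rfl fun c _ => ?_
      rw [if_pos (snoc_surj_of_surj hg c)]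
    · simp [if_neg hg]
  · rw [Finset.sum_comm]
    refine Finset.sum_congr rfl fun c _ => ?_
    rw [Finset.sum_filter]
    have : ∀ g : Fin n → Fin (k+1),
        (if ¬ Function.Surjective g then (if Function.Surjective (Fin.snoc g c : Fin (n+1) → Fin (k+1)) then F (Fin.snoc g c) else 0) else 0)
        = (if (¬ Function.Surjective g ∧ Function.Surjective (Fin.snoc g c : Fin (n+1) → Fin (k+1))) then F (Fin.snoc g c) else 0) := by
      intro g
      by_cases h1 : Function.Surjective g <;> by_cases h2 : Function.Surjective (Fin.snoc g c : Fin (n+1) → Fin (k+1)) <;>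
        simp [h1, h2]
    rw [Finset.sum_congr rfl fun g _ => this g, ← Finset.sum_filter, filter_snoc_surj c,
      Finset.sum_image (fun h₁ _ h₂ _ hh => comp_succAbove_injective c hh)]

noncomputable def Ufun (ω : X → ℝ) (n k : ℕ) (f : (Fin n → X) → ℝ) : ℝ :=
  ∑ y : Fin k → X, ff ω k y * ∑ g ∈ surjs n k, f (y ∘ g)

noncomputable def Afun (ω : X → ℝ) (n k : ℕ) (f : (Fin (n+1) → X) → ℝ) : ℝ :=
  ∑ y : Fin k → X, ff ω k y * ∑ g ∈ surjs n k, ∑ c : Fin k, f (y ∘ Fin.snoc g c)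

noncomputable def Bfun (ω : X → ℝ) (n k : ℕ) (f : (Fin (n+1) → X) → ℝ) : ℝ :=
  ∑ z : Fin (k+1) → X, ff ω (k+1) z *
    ∑ g ∈ surjs n k, f (z ∘ Fin.snoc (Fin.castSucc ∘ g) (Fin.last k))

lemma B_indep (ω : X → ℝ) {n k : ℕ} (c : Fin (k+1)) (h : Fin n → Fin k)
    (f : (Fin (n+1) → X) → ℝ) :
    ∑ z : Fin (k+1) → X, ff ω (k+1) z * f (z ∘ Fin.snoc (c.succAbove ∘ h) c)
      = ∑ z : Fin (k+1) → X, ff ω (k+1) z * f (z ∘ Fin.snoc (Fin.castSucc ∘ h) (Fin.last k)) := by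
  set σ : Fin (k+1) → Fin (k+1) := Fin.snoc (fun j => c.succAbove j) c with hσ
  have hinj : Function.Injective σ := by
    intro i j hij
    induction i using Fin.lastCases with
    | last =>
      induction j using Fin.lastCases with
      | last => rfl
      | cast j =>
        rw [hσ] at hij; simp only [Fin.snoc_last, Fin.snoc_castSucc] at hij
        exact absurd hij (Fin.ne_succAbove c j)
    | cast i =>
      induction j using Fin.lastCases with
      | last =>
        rw [hσ] at hij; simp only [Fin.snoc_last, Fin.snoc_castSucc] at hij
        exact absurd hij (Fin.succAbove_ne c i)
      | cast j =>
        rw [hσ] at hij; simp only [Fin.snoc_castSucc] at hij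
        rw [Fin.succAbove_right_injective (p := c) hij]
  have hbij : Function.Bijective σ := (Finite.injective_iff_bijective).mp hinj
  have hkey : σ ∘ Fin.snoc (Fin.castSucc ∘ h) (Fin.last k) = Fin.snoc (c.succAbove ∘ h) c := by
    funext j
    rw [hσ]
    induction j using Fin.lastCases with
    | last => simp
    | cast j => simp [Function.comp]
  have := Fintype.sum_bijective (fun z : Fin (k+1) → X => z ∘ σ)
    (Function.Bijective.comp_right hbij)
    (fun z => ff ω (k+1) z * f (z ∘ Fin.snoc (c.succAbove ∘ h) c))
    (fun z => ff ω (k+1) z * f (z ∘ Fin.snoc (Fin.castSucc ∘ h) (Fin.last k)))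
    (fun z => by
      show ff ω (k+1) z * f (z ∘ Fin.snoc (c.succAbove ∘ h) c)
          = ff ω (k+1) (z ∘ σ) * f ((z ∘ σ) ∘ Fin.snoc (Fin.castSucc ∘ h) (Fin.last k))
      rw [ff_comp ω σ hbij z, Function.comp_assoc, hkey])
  simpa using this

lemma delta_sum {k : ℕ} (y : Fin k → X) (F : X → ℝ) :
    ∑ a : X, (∑ c : Fin k, if y c = a then (1:ℝ) else 0) * F a = ∑ c : Fin k, F (y c) := by
  simp only [Finset.sum_mul, ite_mul, one_mul, zero_mul]
  rw [Finset.sum_comm]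
  simp

lemma snoc_comp_snoc {n k : ℕ} (y : Fin k → X) (a : X) (g : Fin n → Fin k) :
    (Fin.snoc y a : Fin (k+1) → X) ∘ Fin.snoc (Fin.castSucc ∘ g) (Fin.last k)
      = Fin.snoc (y ∘ g) a := by
  funext j
  induction j using Fin.lastCases with
  | last => simp
  | cast j => simp [Function.comp]

lemma U_split (ω : X → ℝ) (n k : ℕ) (f : (Fin (n+1) → X) → ℝ) :
    Ufun ω n k (fun x => ∑ a : X, ω a * f (Fin.snoc x a)) = Afun ω n k f + Bfun ω n k f := by
  simp only [Ufun, Afun, Bfun]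
  rw [sum_snoc (fun z : Fin (k+1) → X => ff ω (k+1) z *
    ∑ g ∈ surjs n k, f (z ∘ Fin.snoc (Fin.castSucc ∘ g) (Fin.last k)))]
  rw [← Finset.sum_add_distrib]
  refine Finset.sum_congr rfl fun y _ => ?_
  have hRHS2 : (∑ a : X, ff ω (k+1) (Fin.snoc y a) *
        ∑ g ∈ surjs n k, f ((Fin.snoc y a : Fin (k+1) → X) ∘ Fin.snoc (Fin.castSucc ∘ g) (Fin.last k)))
      = ∑ g ∈ surjs n k, ∑ a : X, ff ω (k+1) (Fin.snoc y a) * f (Fin.snoc (y ∘ g) a) := by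
    simp_rw [Finset.mul_sum, snoc_comp_snoc]
    exact Finset.sum_comm
  rw [hRHS2, Finset.mul_sum, Finset.mul_sum, ← Finset.sum_add_distrib]
  refine Finset.sum_congr rfl fun g _ => ?_
  have hc : ∀ c : Fin k, y ∘ Fin.snoc g c = Fin.snoc (y ∘ g) (y c) := fun c => Fin.comp_snoc y g c
  simp_rw [hc]
  rw [← delta_sum y (fun a => f (Fin.snoc (y ∘ g) a))]
  simp_rw [ff_snoc]
  rw [Finset.mul_sum, Finset.mul_sum, ← Finset.sum_add_distrib]
  refine Finset.sum_congr rfl fun a _ => ?_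
  ring

lemma U_decomp (ω : X → ℝ) (n k : ℕ) (f : (Fin (n+1) → X) → ℝ) :
    Ufun ω (n+1) (k+1) f = Afun ω n (k+1) f + ((k:ℝ)+1) * Bfun ω n k f := by
  simp only [Ufun, Afun, Bfun]
  have hdec : ∀ z : Fin (k+1) → X,
      (∑ g' ∈ surjs (n+1) (k+1), f (z ∘ g'))
      = (∑ g ∈ surjs n (k+1), ∑ c : Fin (k+1), f (z ∘ Fin.snoc g c))
        + (∑ c : Fin (k+1), ∑ h ∈ surjs n k, f (z ∘ Fin.snoc (c.succAbove ∘ h) c)) := by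
    intro z
    rw [sum_surjs_succ n k (fun g' => f (z ∘ g'))]
  calc ∑ z : Fin (k+1) → X, ff ω (k+1) z * ∑ g' ∈ surjs (n+1) (k+1), f (z ∘ g')
      = (∑ z : Fin (k+1) → X, ff ω (k+1) z * ∑ g ∈ surjs n (k+1), ∑ c : Fin (k+1), f (z ∘ Fin.snoc g c))
        + ∑ z : Fin (k+1) → X, ff ω (k+1) z * ∑ c : Fin (k+1), ∑ h ∈ surjs n k, f (z ∘ Fin.snoc (c.succAbove ∘ h) c) := by
        rw [← Finset.sum_add_distrib]
        exact Finset.sum_congr rfl fun z _ => by rw [hdec z, mul_add]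
    _ = (∑ z : Fin (k+1) → X, ff ω (k+1) z * ∑ g ∈ surjs n (k+1), ∑ c : Fin (k+1), f (z ∘ Fin.snoc g c))
        + ((k:ℝ)+1) * ∑ z : Fin (k+1) → X, ff ω (k+1) z *
            ∑ h ∈ surjs n k, f (z ∘ Fin.snoc (Fin.castSucc ∘ h) (Fin.last k)) := by
        congr 1
        calc ∑ z : Fin (k+1) → X, ff ω (k+1) z * ∑ c : Fin (k+1), ∑ h ∈ surjs n k, f (z ∘ Fin.snoc (c.succAbove ∘ h) c)
            = ∑ c : Fin (k+1), ∑ h ∈ surjs n k, ∑ z : Fin (k+1) → X, ff ω (k+1) z * f (z ∘ Fin.snoc (c.succAbove ∘ h) c) := by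
              simp_rw [Finset.mul_sum]
              rw [Finset.sum_comm]
              exact Finset.sum_congr rfl fun c _ => Finset.sum_comm
          _ = ∑ c : Fin (k+1), ∑ h ∈ surjs n k, ∑ z : Fin (k+1) → X, ff ω (k+1) z * f (z ∘ Fin.snoc (Fin.castSucc ∘ h) (Fin.last k)) := by
              exact Finset.sum_congr rfl fun c _ => Finset.sum_congr rfl fun h _ => B_indep ω c h f
          _ = ((k:ℝ)+1) * ∑ z : Fin (k+1) → X, ff ω (k+1) z *
                ∑ h ∈ surjs n k, f (z ∘ Fin.snoc (Fin.castSucc ∘ h) (Fin.last k)) := by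
              rw [Finset.sum_const, Finset.card_univ, Fintype.card_fin, nsmul_eq_mul]
              push_cast
              congr 1
              simp_rw [Finset.mul_sum]
              exact Finset.sum_comm

lemma sum_Icc_one {M : Type*} [AddCommMonoid M] (m : ℕ) (G : ℕ → M) :
    ∑ k ∈ Finset.Icc 1 m, G k = ∑ j ∈ Finset.range m, G (j+1) := by
  rw [← Finset.Ico_add_one_right_eq_Icc, Finset.sum_Ico_eq_sum_range]
  simp [Nat.add_comm]

lemma Afun_top (ω : X → ℝ) (n : ℕ) (f : (Fin (n+1) → X) → ℝ) : Afun ω n (n+1) f = 0 := by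
  simp [Afun, surjs_gt_empty (Nat.lt_succ_self n)]

lemma Bfun_bot (ω : X → ℝ) {n : ℕ} (hn : 1 ≤ n) (f : (Fin (n+1) → X) → ℝ) :
    Bfun ω n 0 f = 0 := by
  simp [Bfun, surjs_zero_empty hn]

theorem main (ω : X → ℝ) : ∀ n, 1 ≤ n → ∀ f : (Fin n → X) → ℝ,
    (∑ x : Fin n → X, (∏ i, ω (x i)) * f x)
      = ∑ k ∈ Finset.Icc 1 n, Ufun ω n k f / (k.factorial : ℝ) := by
  intro n hn
  induction n, hn using Nat.le_induction with
  | base =>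
    intro f
    have hsur : surjs 1 1 = Finset.univ := by
      ext g
      simp only [mem_surjs, Finset.mem_univ, iff_true]
      intro i
      exact ⟨0, Subsingleton.elim _ _⟩
    rw [show Finset.Icc 1 1 = {1} from rfl, Finset.sum_singleton]
    simp only [Ufun, hsur, Nat.factorial_one, Nat.cast_one]
    rw [show ∀ r : ℝ, r / 1 = r from fun r => div_one r]
    refine Finset.sum_congr rfl fun y _ => ?_
    have h1 : (∏ i : Fin 1, ω (y i)) = ω (y 0) := by simp
    have h2 : ff ω 1 y = ω (y 0) := by
      rw [ff_succ]
      simp only [ff]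
      rw [show y (Fin.last 0) = y 0 from congrArg y (Subsingleton.elim _ _)]
      simp
    rw [h1, h2]
    congr 1
    have : ∀ g : Fin 1 → Fin 1, y ∘ g = y := by
      intro g; funext i; exact congrArg y (Subsingleton.elim _ _)
    rw [Finset.sum_congr rfl fun g _ => congrArg f (this g), Finset.sum_const,
      Finset.card_univ]
    simp
  | succ n hn ih =>
    intro f
    have hL : (∑ x : Fin (n+1) → X, (∏ i, ω (x i)) * f x)
        = ∑ x : Fin n → X, (∏ i, ω (x i)) * ∑ a : X, ω a * f (Fin.snoc x a) := by
      rw [sum_snoc (fun x : Fin (n+1) → X => (∏ i, ω (x i)) * f x)]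
      refine Finset.sum_congr rfl fun x _ => ?_
      rw [Finset.mul_sum]
      refine Finset.sum_congr rfl fun a _ => ?_
      rw [Fin.prod_univ_castSucc]
      simp only [Fin.snoc_castSucc, Fin.snoc_last]
      ring
    rw [hL, ih (fun x => ∑ a : X, ω a * f (Fin.snoc x a))]
    simp_rw [U_split ω n _ f]
    rw [sum_Icc_one n, sum_Icc_one (n+1)]
    have hterm : ∀ j, Ufun ω (n+1) (j+1) f / ((j+1).factorial : ℝ)
        = Afun ω n (j+1) f / ((j+1).factorial : ℝ) + Bfun ω n j f / (j.factorial : ℝ) := by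
      intro j
      rw [U_decomp ω n j f, add_div]
      congr 1
      rw [Nat.factorial_succ]
      have h1 : ((j:ℝ)+1) ≠ 0 := by positivity
      have h2 : ((j.factorial : ℝ)) ≠ 0 := by positivity
      push_cast
      field_simp
    simp_rw [hterm]
    rw [Finset.sum_add_distrib]
    rw [Finset.sum_range_succ, Afun_top, Finset.sum_range_succ' (fun j => Bfun ω n j f / (j.factorial : ℝ)),
      Bfun_bot ω hn f]
    simp only [zero_div, add_zero, zero_add]
    rw [← Finset.sum_add_distrib]
    exact Finset.sum_congr rfl fun j _ => add_div _ _ _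

end StirAux

/-- For every finitely supported signed measure `ω` on a finite set `X` and
every symmetric `f : X^n → ℝ`, `⟨ω^{⊗n}, f⟩ = Σ_{k=1}^{n} ⟨(ω)_k, S(n,k)f⟩`, where
`S(n,k)` is the Stirling operator of the second kind. -/
theorem stirling_second_kind_expansion
    {X : Type*} [Fintype X] [DecidableEq X] {n : ℕ} (hn : 1 ≤ n)
    (ω : X → ℝ) (f : (Fin n → X) → ℝ) (hf : IsSymmFun f) :
    pairing n (prodMeas ω n) f = ∑ k ∈ Finset.Icc 1 n, pairing k (ff ω k) (Sop n k f) := by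
  have h := StirAux.main ω n hn f
  simp only [pairing, prodMeas] at h ⊢
  rw [h]
  refine Finset.sum_congr rfl fun k _ => ?_
  rw [StirAux.Ufun, Finset.sum_div]
  refine Finset.sum_congr rfl fun y _ => ?_
  simp only [Sop]
  rw [mul_div_assoc]
end

section
/- Define, for a finite set X and k ≤ n, the unsigned Stirling operator of the first kind c(n,k) acting on symmetric functions f : X^n → ℝ by (c(n,k)f) = Σ_{λ={λ₁,…,λ_k} ∈ UP(n,k)} (|λ₁|−1)!⋯(|λ_k|−1)! · D_λ f. Then for every finitely supported signed measure ω on X and every symmetric f : X^n → ℝ, ⟨(ω)^{(n)}, f⟩ = Σ_{k=1}^{n} ⟨ω^{⊗k}, c(n,k)f⟩, where (ω)^{(n)} := (−1)ⁿ·(−ω)_n is the rising factorial measure. -/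
open Finset

section Aux
set_option linter.unusedSectionVars false
variable {X : Type*} [Fintype X] [DecidableEq X]
lemma mem_surjs {n k : ℕ} {g : Fin n → Fin k} : g ∈ surjs n k ↔ Function.Surjective g := by
  simp [surjs]

lemma surjs_empty_of_lt {n k : ℕ} (h : n < k) : surjs n k = ∅ := by
  ext g
  simp only [mem_surjs, Finset.notMem_empty, iff_false]
  intro hg
  have := Fintype.card_le_of_surjective g hg
  simp only [Fintype.card_fin] at this
  omega

lemma surjs_zero {n : ℕ} (hn : 1 ≤ n) : surjs n 0 = ∅ := by
  ext g
  exact (g ⟨0, hn⟩).elim0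

lemma fiberCard_eq_sum {n k : ℕ} (g : Fin n → Fin k) (i : Fin k) :
    fiberCard g i = ∑ j : Fin n, if g j = i then 1 else 0 :=
  Finset.card_filter _ _

lemma fiberCard_pos {n k : ℕ} {g : Fin n → Fin k} (hg : Function.Surjective g) (i : Fin k) :
    0 < fiberCard g i := by
  obtain ⟨j, hj⟩ := hg i
  exact Finset.card_pos.mpr ⟨j, by simp [hj]⟩

lemma fiberCard_snoc {n k : ℕ} (g' : Fin n → Fin k) (i0 i : Fin k) :
    fiberCard (Fin.snoc g' i0) i = fiberCard g' i + (if i0 = i then 1 else 0) := by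
  rw [fiberCard_eq_sum, fiberCard_eq_sum, Fin.sum_univ_castSucc]
  simp [Fin.snoc_castSucc, Fin.snoc_last]

lemma sum_snoc_eq {n : ℕ} (F : (Fin (n+1) → X) → ℝ) :
    ∑ y : Fin (n+1) → X, F y = ∑ y' : Fin n → X, ∑ x : X, F (Fin.snoc y' x) := by
  rw [← (Fin.snocEquiv (fun _ => X)).sum_comp F, Fintype.sum_prod_type, Finset.sum_comm]
  simp [Fin.snocEquiv]

lemma sum_insertNth_eq {k : ℕ} (i0 : Fin (k+1)) (F : (Fin (k+1) → X) → ℝ) :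
    ∑ z : Fin (k+1) → X, F z = ∑ x : X, ∑ z' : Fin k → X, F (i0.insertNth x z') := by
  rw [← (Fin.insertNthEquiv (fun _ => X) i0).sum_comp F, Fintype.sum_prod_type]
  simp [Fin.insertNthEquiv]

lemma sum_comp_fiber {n k : ℕ} (g : Fin n → Fin k) (h : Fin k → ℝ) :
    ∑ i : Fin n, h (g i) = ∑ i0 : Fin k, (fiberCard g i0 : ℝ) * h i0 := by
  rw [← Fintype.sum_fiberwise g (fun i => h (g i))]
  refine Finset.sum_congr rfl fun i0 _ => ?_
  have : ∀ i : {i // g i = i0}, h (g i.1) = h i0 := fun i => by rw [i.2]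
  rw [Finset.sum_congr rfl fun i _ => this i, Finset.sum_const, Finset.card_univ,
    Fintype.card_subtype, nsmul_eq_mul]
  rfl

lemma pairing_cop (ω : X → ℝ) (n k : ℕ) (f : (Fin n → X) → ℝ) :
    pairing k (prodMeas ω k) (cop n k f)
      = (∑ g ∈ surjs n k, (∏ i : Fin k, ((fiberCard g i - 1).factorial : ℝ)) *
          ∑ z : Fin k → X, (∏ i, ω (z i)) * f (z ∘ g)) / k.factorial := by
  unfold pairing cop prodMeas
  have hk : (k.factorial : ℝ) ≠ 0 := by positivity
  rw [eq_div_iff hk, Finset.sum_mul]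
  have h1 : ∀ z : Fin k → X,
      (∏ i, ω (z i)) *
          ((∑ g ∈ surjs n k, (∏ i : Fin k, ((fiberCard g i - 1).factorial : ℝ)) * f (z ∘ g)) /
            k.factorial) * k.factorial
        = ∑ g ∈ surjs n k,
            (∏ i : Fin k, ((fiberCard g i - 1).factorial : ℝ)) * ((∏ i, ω (z i)) * f (z ∘ g)) := by
    intro z
    rw [mul_assoc, div_mul_cancel₀ _ hk, Finset.mul_sum]
    exact Finset.sum_congr rfl fun g _ => by ring
  rw [Finset.sum_congr rfl fun z _ => h1 z, Finset.sum_comm]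
  exact Finset.sum_congr rfl fun g _ => by rw [Finset.mul_sum]

lemma weight_snoc {n k : ℕ} {g' : Fin n → Fin (k+1)} (hg' : Function.Surjective g')
    (i0 : Fin (k+1)) :
    (∏ i : Fin (k+1), ((fiberCard (Fin.snoc g' i0) i - 1).factorial : ℝ))
      = (fiberCard g' i0 : ℝ) * ∏ i : Fin (k+1), ((fiberCard g' i - 1).factorial : ℝ) := by
  rw [Fin.prod_univ_succAbove (fun i => ((fiberCard (Fin.snoc g' i0) i - 1).factorial : ℝ)) i0,
    Fin.prod_univ_succAbove (fun i => ((fiberCard g' i - 1).factorial : ℝ)) i0]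
  have h1 : fiberCard (Fin.snoc g' i0) i0 = fiberCard g' i0 + 1 := by
    rw [fiberCard_snoc]; simp
  have h2 : ∀ m : Fin k, fiberCard (Fin.snoc g' i0) (i0.succAbove m) = fiberCard g' (i0.succAbove m) := by
    intro m
    rw [fiberCard_snoc, if_neg (fun h => Fin.succAbove_ne i0 m h.symm), add_zero]
  rw [h1]
  simp only [h2]
  rw [Nat.add_sub_cancel]
  rw [← Nat.mul_factorial_pred (fiberCard_pos hg' i0).ne']
  push_cast
  ring

lemma weight_sing {n k : ℕ} (g' : Fin n → Fin k) (i0 : Fin (k+1)) :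
    (∏ i : Fin (k+1),
        ((fiberCard (Fin.snoc (i0.succAbove ∘ g') i0) i - 1).factorial : ℝ))
      = ∏ m : Fin k, ((fiberCard g' m - 1).factorial : ℝ) := by
  rw [Fin.prod_univ_succAbove
    (fun i => ((fiberCard (Fin.snoc (i0.succAbove ∘ g') i0) i - 1).factorial : ℝ)) i0]
  have h0 : fiberCard (i0.succAbove ∘ g') i0 = 0 := by
    rw [fiberCard_eq_sum]
    simp [Function.comp, Fin.succAbove_ne]
  have h1 : fiberCard (Fin.snoc (i0.succAbove ∘ g') i0) i0 = 1 := by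
    rw [fiberCard_snoc, h0]; simp
  have h2 : ∀ m : Fin k,
      fiberCard (Fin.snoc (i0.succAbove ∘ g') i0) (i0.succAbove m)
        = fiberCard g' m := by
    intro m
    rw [fiberCard_snoc, if_neg (fun h => Fin.succAbove_ne i0 m h.symm), add_zero]
    rw [fiberCard_eq_sum, fiberCard_eq_sum]
    exact Finset.sum_congr rfl fun j _ => by
      simp [Function.comp, Fin.succAbove_right_injective.eq_iff]
  rw [h1]
  simp only [h2]
  simp


lemma sum_S2 {n k : ℕ} (Q : (Fin (n+1) → Fin (k+1)) → ℝ) :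
    (∑ g ∈ (surjs (n+1) (k+1)).filter (fun g => ∃ j : Fin n, g j.castSucc = g (Fin.last n)),
        (∏ i : Fin (k+1), ((fiberCard g i - 1).factorial : ℝ)) * Q g)
      = ∑ g' ∈ surjs n (k+1), ∑ i0 : Fin (k+1),
          (fiberCard g' i0 : ℝ) *
            (∏ i : Fin (k+1), ((fiberCard g' i - 1).factorial : ℝ)) * Q (Fin.snoc g' i0) := by
  rw [← Finset.sum_product']
  refine (Finset.sum_bij (fun p _ => Fin.snoc p.1 p.2) ?_ ?_ ?_ ?_).symm
  · rintro ⟨g', i0⟩ hp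
    dsimp only
    rw [Finset.mem_product] at hp
    have hg' : Function.Surjective g' := mem_surjs.mp hp.1
    rw [Finset.mem_filter]
    constructor
    · rw [mem_surjs]
      intro i
      obtain ⟨j, hj⟩ := hg' i
      exact ⟨j.castSucc, by simp [hj]⟩
    · obtain ⟨j, hj⟩ := hg' i0
      exact ⟨j, by simp [hj]⟩
  · rintro ⟨g₁', i₁⟩ h₁ ⟨g₂', i₂⟩ h₂ heq
    have hlast := congrFun heq (Fin.last n)
    simp only [Fin.snoc_last] at hlast
    have hg : g₁' = g₂' := funext fun j => by
      have := congrFun heq j.castSucc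
      simpa using this
    subst hg; subst hlast; rfl
  · intro g hg
    rw [Finset.mem_filter, mem_surjs] at hg
    obtain ⟨hgs, j0, hj0⟩ := hg
    refine ⟨⟨fun j => g j.castSucc, g (Fin.last n)⟩, ?_, ?_⟩
    · rw [Finset.mem_product]
      refine ⟨mem_surjs.mpr fun i => ?_, Finset.mem_univ _⟩
      obtain ⟨j, hj⟩ := hgs i
      cases j using Fin.lastCases with
      | last => exact ⟨j0, by show g j0.castSucc = i; rw [hj0, hj]⟩
      | cast j' => exact ⟨j', hj⟩
    · dsimp only
      funext j
      cases j using Fin.lastCases with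
      | last => simp
      | cast j' => simp
  · rintro ⟨g', i0⟩ hp
    dsimp only
    rw [Finset.mem_product] at hp
    rw [weight_snoc (mem_surjs.mp hp.1) i0]

lemma sum_S1 {n k : ℕ} (Q : (Fin (n+1) → Fin (k+1)) → ℝ) :
    (∑ g ∈ (surjs (n+1) (k+1)).filter
        (fun g => ¬ ∃ j : Fin n, g j.castSucc = g (Fin.last n)),
        (∏ i : Fin (k+1), ((fiberCard g i - 1).factorial : ℝ)) * Q g)
      = ∑ i0 : Fin (k+1), ∑ g' ∈ surjs n k,
          (∏ m : Fin k, ((fiberCard g' m - 1).factorial : ℝ)) *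
            Q (Fin.snoc (i0.succAbove ∘ g') i0) := by
  rw [← Finset.sum_product']
  refine (Finset.sum_bij (fun p _ => Fin.snoc (p.1.succAbove ∘ p.2) p.1) ?_ ?_ ?_ ?_).symm
  · rintro ⟨i0, g'⟩ hp
    dsimp only
    rw [Finset.mem_product] at hp
    have hg' : Function.Surjective g' := mem_surjs.mp hp.2
    rw [Finset.mem_filter]
    constructor
    · rw [mem_surjs]
      intro i
      by_cases hi : i = i0
      · exact ⟨Fin.last n, by rw [Fin.snoc_last, hi]⟩
      · obtain ⟨m, hm⟩ := Fin.exists_succAbove_eq hi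
        obtain ⟨j, hj⟩ := hg' m
        exact ⟨j.castSucc, by simp [Function.comp, hj, hm]⟩
    · rintro ⟨j, hj⟩
      rw [Fin.snoc_castSucc, Fin.snoc_last] at hj
      exact Fin.succAbove_ne i0 (g' j) hj
      
  · rintro ⟨i₁, g₁⟩ h₁ ⟨i₂, g₂⟩ h₂ heq
    have hlast := congrFun heq (Fin.last n)
    simp only [Fin.snoc_last] at hlast
    subst hlast
    have hg : g₁ = g₂ := funext fun j => by
      have := congrFun heq j.castSucc
      simp only [Fin.snoc_castSucc, Function.comp_apply] at this
      exact Fin.succAbove_right_injective this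
    subst hg; rfl
  · intro g hg
    rw [Finset.mem_filter, mem_surjs] at hg
    obtain ⟨hgs, hnex⟩ := hg
    push_neg at hnex
    have hch : ∀ j : Fin n, ∃ m : Fin k, (g (Fin.last n)).succAbove m = g j.castSucc :=
      fun j => Fin.exists_succAbove_eq (hnex j)
    choose g' hg' using hch
    refine ⟨⟨g (Fin.last n), g'⟩, ?_, ?_⟩

    · rw [Finset.mem_product]
      refine ⟨Finset.mem_univ _, mem_surjs.mpr fun m => ?_⟩
      obtain ⟨j, hj⟩ := hgs ((g (Fin.last n)).succAbove m)
      cases j using Fin.lastCases with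
      | last => exact absurd hj.symm (Fin.succAbove_ne _ m)
      | cast j' => exact ⟨j', Fin.succAbove_right_injective ((hg' j').trans hj)⟩
    · dsimp only
      funext j
      cases j using Fin.lastCases with
      | last => simp
      | cast j' => simp [Function.comp, hg' j']
  · rintro ⟨i0, g'⟩ hp
    dsimp only
    rw [weight_sing g' i0]

lemma core (ω : X → ℝ) (n k : ℕ) (f : (Fin (n+1) → X) → ℝ) :
    pairing (k+1) (prodMeas ω (k+1)) (cop (n+1) (k+1) f)
      = (∑ x : X, ω x * pairing k (prodMeas ω k) (cop n k (fun y' => f (Fin.snoc y' x))))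
        + ∑ i : Fin n, pairing (k+1) (prodMeas ω (k+1))
            (cop n (k+1) (fun y' => f (Fin.snoc y' (y' i)))) := by
  classical
  have hk : (Nat.factorial k : ℝ) ≠ 0 := by positivity
  have hk1 : (Nat.factorial (k+1) : ℝ) ≠ 0 := by positivity
  -- value of Q on "join" maps
  have hQsnoc : ∀ (g' : Fin n → Fin (k+1)) (i0 : Fin (k+1)),
      (∑ z : Fin (k+1) → X, (∏ i, ω (z i)) * f (z ∘ Fin.snoc g' i0))
        = ∑ z : Fin (k+1) → X, (∏ i, ω (z i)) * f (Fin.snoc (z ∘ g') (z i0)) := by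
    intro g' i0
    refine Finset.sum_congr rfl fun z _ => ?_
    rw [Fin.comp_snoc]
  -- value of Q on "new block" maps
  have hQsing : ∀ (i0 : Fin (k+1)) (g' : Fin n → Fin k),
      (∑ z : Fin (k+1) → X, (∏ i, ω (z i)) * f (z ∘ Fin.snoc (i0.succAbove ∘ g') i0))
        = ∑ x : X, ω x * ∑ z' : Fin k → X,
            (∏ m, ω (z' m)) * f (Fin.snoc (z' ∘ g') x) := by
    intro i0 g'
    rw [sum_insertNth_eq i0]
    refine Finset.sum_congr rfl fun x _ => ?_
    rw [Finset.mul_sum]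
    refine Finset.sum_congr rfl fun z' _ => ?_
    have hc : (Fin.insertNth (α := fun _ => X) i0 x z') ∘ Fin.snoc (i0.succAbove ∘ g') i0
        = Fin.snoc (z' ∘ g') x := by
      funext j
      cases j using Fin.lastCases with
      | last => simp
      | cast j' =>
        simp [Function.comp, Fin.insertNth_apply_succAbove]
    rw [hc, Fin.prod_univ_succAbove
      (fun i => ω (Fin.insertNth (α := fun _ => X) i0 x z' i)) i0]
    simp only [Fin.insertNth_apply_same, Fin.insertNth_apply_succAbove]
    ring
  have hS2 := sum_S2 (n := n) (k := k)
    (fun g => ∑ z : Fin (k+1) → X, (∏ i, ω (z i)) * f (z ∘ g))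
  have hS1 := sum_S1 (n := n) (k := k)
    (fun g => ∑ z : Fin (k+1) → X, (∏ i, ω (z i)) * f (z ∘ g))
  simp only [hQsnoc] at hS2
  simp only [hQsing] at hS1
  -- constant sum over i0 in hS1
  rw [pairing_cop]
  rw [← Finset.sum_filter_add_sum_filter_not (surjs (n+1) (k+1))
      (fun g => ∃ j : Fin n, g j.castSucc = g (Fin.last n))
      (fun g => (∏ i : Fin (k+1), ((fiberCard g i - 1).factorial : ℝ)) *
        ∑ z : Fin (k+1) → X, (∏ i, ω (z i)) * f (z ∘ g))]
  rw [hS2, hS1]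
  rw [Finset.sum_const, Finset.card_univ, Fintype.card_fin, nsmul_eq_mul]
  -- Now rewrite the two target pairings
  have EqA : (∑ x : X, ω x * pairing k (prodMeas ω k) (cop n k (fun y' => f (Fin.snoc y' x))))
      = (∑ g' ∈ surjs n k, (∏ m : Fin k, ((fiberCard g' m - 1).factorial : ℝ)) *
          ∑ x : X, ω x * ∑ z' : Fin k → X, (∏ m, ω (z' m)) * f (Fin.snoc (z' ∘ g') x))
        / k.factorial := by
    simp only [pairing_cop]
    simp only [← mul_div_assoc]
    rw [← Finset.sum_div]
    congr 1
    simp only [Finset.mul_sum]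
    rw [Finset.sum_comm]
    exact Finset.sum_congr rfl fun g' _ => Finset.sum_congr rfl fun x _ =>
      Finset.sum_congr rfl fun z' _ => by ring
  have EqB : (∑ i : Fin n, pairing (k+1) (prodMeas ω (k+1))
        (cop n (k+1) (fun y' => f (Fin.snoc y' (y' i)))))
      = (∑ g' ∈ surjs n (k+1), ∑ i0 : Fin (k+1),
          (fiberCard g' i0 : ℝ) *
            (∏ i : Fin (k+1), ((fiberCard g' i - 1).factorial : ℝ)) *
            ∑ z : Fin (k+1) → X, (∏ i, ω (z i)) * f (Fin.snoc (z ∘ g') (z i0)))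
        / (k+1).factorial := by
    simp only [pairing_cop]
    rw [← Finset.sum_div]
    congr 1
    rw [Finset.sum_comm]
    refine Finset.sum_congr rfl fun g' _ => ?_
    trans ((∏ i : Fin (k+1), ((fiberCard g' i - 1).factorial : ℝ)) *
        ∑ z : Fin (k+1) → X, (∏ i, ω (z i)) *
          ∑ i0 : Fin (k+1), (fiberCard g' i0 : ℝ) * f (Fin.snoc (z ∘ g') (z i0)))
    · rw [← Finset.mul_sum]
      congr 1
      rw [Finset.sum_comm]
      refine Finset.sum_congr rfl fun z _ => ?_
      rw [← Finset.mul_sum]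
      congr 1
      exact sum_comp_fiber g' (fun i0 => f (Fin.snoc (z ∘ g') (z i0)))
    · simp only [Finset.mul_sum, Finset.sum_mul]
      rw [Finset.sum_comm]
      exact Finset.sum_congr rfl fun i0 _ => Finset.sum_congr rfl fun z _ => by ring
  rw [EqA, EqB]
  have hfac : ((k+1).factorial : ℝ) = (k+1) * k.factorial := by
    push_cast [Nat.factorial_succ]
    ring
  rw [hfac]
  have hk1' : ((k : ℝ) + 1) ≠ 0 := by positivity
  field_simp
  push_cast
  ring

lemma pairing_cop_empty {n k : ℕ} (ω : X → ℝ) (f : (Fin n → X) → ℝ) (h : surjs n k = ∅) :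
    pairing k (prodMeas ω k) (cop n k f) = 0 := by
  unfold pairing cop
  simp [h]

lemma sum_Icc_one (m : ℕ) (h : ℕ → ℝ) :
    ∑ k ∈ Finset.Icc 1 m, h k = ∑ k ∈ Finset.range m, h (k+1) := by
  induction m with
  | zero => simp
  | succ m ih => rw [Finset.sum_Icc_succ_top (by omega), ih, Finset.sum_range_succ]

lemma ff_snoc (μ : X → ℝ) (n : ℕ) (y' : Fin n → X) (x : X) :
    ff μ (n+1) (Fin.snoc y' x)
      = ff μ n y' * (μ x - ∑ i : Fin n, if y' i = x then (1:ℝ) else 0) := by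
  simp [ff]

lemma base_case (ω : X → ℝ) (f : (Fin 1 → X) → ℝ) :
    pairing 1 (fun y => (-1:ℝ)^1 * ff (-ω) 1 y) f
      = ∑ k ∈ Finset.Icc 1 1, pairing k (prodMeas ω k) (cop 1 k f) := by
  rw [Finset.Icc_self, Finset.sum_singleton]
  unfold pairing
  refine Finset.sum_congr rfl fun y _ => ?_
  have h1 : ff (-ω) 1 y = -(ω (y 0)) := by
    have h0 : y = Fin.snoc (fun i : Fin 0 => y i.castSucc) (y (Fin.last 0)) := by
      funext j
      cases j using Fin.lastCases with
      | last => rw [Fin.snoc_last]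
      | cast j' => exact j'.elim0
    conv_lhs => rw [h0]
    rw [ff_snoc]
    simp [ff]
  have hsurjs : surjs 1 1 = Finset.univ := by
    refine Finset.filter_true_of_mem fun g _ => fun i => ⟨0, Subsingleton.elim _ _⟩
  have h2 : cop 1 1 f y = f y := by
    unfold cop
    rw [hsurjs, Fintype.sum_unique]
    have hfc : fiberCard (default : Fin 1 → Fin 1) 0 = 1 := by
      have : (Finset.univ.filter fun j : Fin 1 => (default : Fin 1 → Fin 1) j = 0)
          = Finset.univ := Finset.filter_true_of_mem fun j _ => Subsingleton.elim _ _
      simp [fiberCard, this]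
    have hcomp : y ∘ (default : Fin 1 → Fin 1) = y := by
      funext j
      exact congrArg y (Subsingleton.elim _ _)
    rw [Fin.prod_univ_one, hfc, hcomp]
    simp
  dsimp only
  rw [h1, h2]
  have h3 : prodMeas ω 1 y = ω (y 0) := by
    simp [prodMeas]
  rw [h3]
  ring

lemma Lstep (ω : X → ℝ) (n : ℕ) (f : (Fin (n+1) → X) → ℝ) :
    pairing (n+1) (fun y => (-1:ℝ)^(n+1) * ff (-ω) (n+1) y) f
      = (∑ x : X, ω x *
            pairing n (fun y => (-1:ℝ)^n * ff (-ω) n y) (fun y' => f (Fin.snoc y' x)))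
        + ∑ i : Fin n,
            pairing n (fun y => (-1:ℝ)^n * ff (-ω) n y) (fun y' => f (Fin.snoc y' (y' i))) := by
  unfold pairing
  refine Eq.trans (sum_snoc_eq fun y => ((-1:ℝ)^(n+1) * ff (-ω) (n+1) y) * f y) ?_
  have key : ∀ y' : Fin n → X,
      (∑ x : X, ((-1:ℝ)^(n+1) * ff (-ω) (n+1) (Fin.snoc y' x)) * f (Fin.snoc y' x))
        = (∑ x : X, ω x * (((-1:ℝ)^n * ff (-ω) n y') * f (Fin.snoc y' x)))
          + ∑ i : Fin n, ((-1:ℝ)^n * ff (-ω) n y') * f (Fin.snoc y' (y' i)) := by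
    intro y'
    have h1 : ∀ x : X, ((-1:ℝ)^(n+1) * ff (-ω) (n+1) (Fin.snoc y' x)) * f (Fin.snoc y' x)
        = ω x * (((-1:ℝ)^n * ff (-ω) n y') * f (Fin.snoc y' x))
          + ∑ i : Fin n, (if y' i = x then (1:ℝ) else 0) *
              (((-1:ℝ)^n * ff (-ω) n y') * f (Fin.snoc y' x)) := by
      intro x
      rw [ff_snoc, ← Finset.sum_mul]
      have : (-ω) x = -(ω x) := rfl
      rw [this]
      ring
    rw [Finset.sum_congr rfl fun x _ => h1 x, Finset.sum_add_distrib]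
    congr 1
    rw [Finset.sum_comm]
    refine Finset.sum_congr rfl fun i _ => ?_
    simp only [ite_mul, one_mul, zero_mul]
    rw [Finset.sum_ite_eq]
    simp
  rw [Finset.sum_congr rfl fun y' _ => key y', Finset.sum_add_distrib]
  congr 1
  · rw [Finset.sum_comm]
    refine Finset.sum_congr rfl fun x _ => ?_
    rw [Finset.mul_sum]
  · rw [Finset.sum_comm]

lemma key_induction (ω : X → ℝ) :
    ∀ n : ℕ, 1 ≤ n → ∀ f : (Fin n → X) → ℝ,
      pairing n (fun y => (-1:ℝ)^n * ff (-ω) n y) f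
        = ∑ k ∈ Finset.Icc 1 n, pairing k (prodMeas ω k) (cop n k f) := by
  intro n hn
  induction n, hn using Nat.le_induction with
  | base => exact fun f => base_case ω f
  | succ n hn ih =>
    intro f
    rw [Lstep, sum_Icc_one (n+1) (fun k => pairing k (prodMeas ω k) (cop (n+1) k f))]
    rw [Finset.sum_congr rfl fun k _ => core ω n k f, Finset.sum_add_distrib]
    congr 1
    · rw [Finset.sum_comm]
      refine Finset.sum_congr rfl fun x _ => ?_
      rw [ih (fun y' => f (Fin.snoc y' x)),
        sum_Icc_one n (fun k => pairing k (prodMeas ω k)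
          (cop n k (fun y' => f (Fin.snoc y' x)))),
        Finset.sum_range_succ' (fun k => ω x * pairing k (prodMeas ω k)
          (cop n k (fun y' => f (Fin.snoc y' x)))) n]
      rw [pairing_cop_empty ω _ (surjs_zero hn), Finset.mul_sum]
      simp
    · rw [Finset.sum_comm]
      refine Finset.sum_congr rfl fun i _ => ?_
      rw [ih (fun y' => f (Fin.snoc y' (y' i))),
        sum_Icc_one n (fun k => pairing k (prodMeas ω k)
          (cop n k (fun y' => f (Fin.snoc y' (y' i))))),
        Finset.sum_range_succ (fun k => pairing (k+1) (prodMeas ω (k+1))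
          (cop n (k+1) (fun y' => f (Fin.snoc y' (y' i))))) n]
      rw [pairing_cop_empty ω _ (surjs_empty_of_lt (by omega)), add_zero]

end Aux


/-- With the rising factorial measure `(ω)^{(n)} := (−1)ⁿ·(−ω)_n`, for every
finitely supported signed measure `ω` and symmetric `f : X^n → ℝ`,
`⟨(ω)^{(n)}, f⟩ = Σ_{k=1}^{n} ⟨ω^{⊗k}, c(n,k)f⟩`, where `c(n,k)` is the unsigned Stirling
operator of the first kind. -/
theorem stirling_first_kind_expansion
    {X : Type*} [Fintype X] [DecidableEq X] {n : ℕ} (hn : 1 ≤ n)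
    (ω : X → ℝ) (f : (Fin n → X) → ℝ) (hf : IsSymmFun f) :
    pairing n (fun y => (-1 : ℝ) ^ n * ff (-ω) n y) f
      = ∑ k ∈ Finset.Icc 1 n, pairing k (prodMeas ω k) (cop n k f) :=
  key_induction ω n hn f
end

section
/- Define the Lah operator L(n,k) on symmetric functions f : X^n → ℝ by L(n,k)f = Σ_{λ={λ₁,…,λ_k}∈UP(n,k)} |λ₁|!⋯|λ_k|! · D_λ f. Then L(n,k) = Σ_{i=k}^{n} S(i,k) ∘ c(n,i), where S and c are the Stirling operators of the second and (unsigned) first kind. -/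
open Finset

namespace LahAux



/-- conjugation by an equiv as a monoid hom -/
def permCongrHom {α β : Type*} (e : α ≃ β) : Equiv.Perm α →* Equiv.Perm β :=
  MonoidHom.mk' (fun τ => e.permCongr τ) (fun p q => by ext x; simp [Equiv.Perm.mul_apply])

@[simp] lemma permCongrHom_apply {α β : Type*} (e : α ≃ β) (τ : Equiv.Perm α) (x : β) :
    permCongrHom e τ x = e (τ (e.symm x)) := rfl

open Fin.CommRing in
lemma finRotate_pow (n t : ℕ) (x : Fin (n + 1)) :
    ((finRotate (n + 1)) ^ t) x = x + (t : Fin (n + 1)) := by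
  induction t generalizing x with
  | zero => simp
  | succ t ih =>
      rw [pow_succ, Equiv.Perm.mul_apply, finRotate_succ_apply, ih]
      push_cast
      ring

open Fin.CommRing in
lemma finRotate_sameCycle (n : ℕ) (a b : Fin (n + 1)) :
    (finRotate (n + 1)).SameCycle a b := by
  refine ⟨(((b - a : Fin (n + 1)) : ℕ) : ℤ), ?_⟩
  rw [zpow_natCast, finRotate_pow]
  simp [Fin.cast_val_eq_self]


section Orbits
variable {α : Type*} [Fintype α]
lemma no_short_period {σ : Equiv.Perm α} (hσ : ∀ a b : α, σ.SameCycle a b)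
    {a0 : α} {d : ℕ} (hd0 : 0 < d) (hdm : d < Fintype.card α) (hfix : (σ ^ d) a0 = a0) :
    False := by
  have hsur : Function.Surjective (fun t : Fin d => (σ ^ (t : ℕ)) a0) := by
    intro a
    obtain ⟨z, hz⟩ := hσ a0 a
    have hdz : (d : ℤ) ≠ 0 := by exact_mod_cast hd0.ne'
    refine ⟨⟨(z % d).toNat, ?_⟩, ?_⟩
    · have h1 : z % (d : ℤ) < d := Int.emod_lt_of_pos z (by exact_mod_cast hd0)
      have h2 : 0 ≤ z % (d : ℤ) := Int.emod_nonneg z hdz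
      omega
    · show (σ ^ ((z % (d : ℤ)).toNat)) a0 = a
      have hq : (σ ^ ((d : ℤ) * (z / d))) a0 = a0 := by
        rw [zpow_mul]
        have : (σ ^ (d : ℤ)) a0 = a0 := by rw [zpow_natCast]; exact hfix
        exact Equiv.Perm.zpow_apply_eq_self_of_apply_eq_self this _
      have h1 : (σ ^ (z % (d : ℤ))) a0 = a := by
        calc (σ ^ (z % (d : ℤ))) a0 = (σ ^ (z % (d : ℤ))) ((σ ^ ((d : ℤ) * (z / d))) a0) := by
              rw [hq]
        _ = (σ ^ (z % (d : ℤ) + (d : ℤ) * (z / d))) a0 := by rw [zpow_add, Equiv.Perm.mul_apply]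
        _ = (σ ^ z) a0 := by rw [Int.emod_add_mul_ediv]
        _ = a := hz
      rw [← h1, ← zpow_natCast, Int.toNat_of_nonneg (Int.emod_nonneg z hdz)]
  have := Fintype.card_le_of_surjective _ hsur
  simp only [Fintype.card_fin] at this
  omega

lemma orbit_injective {σ : Equiv.Perm α} (hσ : ∀ a b : α, σ.SameCycle a b) (a0 : α) :
    Function.Injective (fun j : Fin (Fintype.card α) => (σ ^ (j : ℕ)) a0) := by
  have key : ∀ i j : Fin (Fintype.card α), (i : ℕ) < (j : ℕ) →
      (σ ^ (i : ℕ)) a0 = (σ ^ (j : ℕ)) a0 → False := by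
    intro i j hij heq
    have hsplit : (σ ^ (i : ℕ)) ((σ ^ ((j : ℕ) - (i : ℕ))) a0) = (σ ^ (i : ℕ)) a0 := by
      rw [← Equiv.Perm.mul_apply, ← pow_add]
      rw [show (i : ℕ) + ((j : ℕ) - (i : ℕ)) = (j : ℕ) by omega]
      exact heq.symm
    have hfix := (σ ^ (i : ℕ)).injective hsplit
    exact no_short_period hσ (by omega) (by omega) hfix
  intro i j heq
  rcases lt_trichotomy (i : ℕ) (j : ℕ) with h | h | h
  · exact absurd heq (fun he => key i j h he)
  · exact Fin.ext h
  · exact absurd heq.symm (fun he => key j i h he)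

lemma orbit_bijective {σ : Equiv.Perm α} (hσ : ∀ a b : α, σ.SameCycle a b) (a0 : α) :
    Function.Bijective (fun j : Fin (Fintype.card α) => (σ ^ (j : ℕ)) a0) :=
  (Fintype.bijective_iff_injective_and_card _).mpr ⟨orbit_injective hσ a0, by simp⟩

lemma pow_card_fix {σ : Equiv.Perm α} (hσ : ∀ a b : α, σ.SameCycle a b) (a0 : α) :
    (σ ^ Fintype.card α) a0 = a0 := by
  obtain ⟨t, ht⟩ := (orbit_bijective hσ a0).surjective ((σ ^ Fintype.card α) a0)
  simp only [] at ht
  by_cases h0 : (t : ℕ) = 0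
  · rw [h0] at ht; simpa using ht.symm
  · exfalso
    have hsplit : (σ ^ (t : ℕ)) ((σ ^ (Fintype.card α - (t : ℕ))) a0) = (σ ^ (t : ℕ)) a0 := by
      rw [← Equiv.Perm.mul_apply, ← pow_add]
      rw [show (t : ℕ) + (Fintype.card α - (t : ℕ)) = Fintype.card α by omega]
      exact ht.symm
    have hfix := (σ ^ (t : ℕ)).injective hsplit
    have ht2 := t.2
    exact no_short_period hσ (by omega) (by omega) hfix


end Orbits

section Trans
variable {α : Type*} [Fintype α] [DecidableEq α]
open Fin.CommRing in
lemma card_transitive_aux {n : ℕ} (h : Fintype.card α = n + 1) :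
    Fintype.card {σ : Equiv.Perm α // ∀ a b : α, σ.SameCycle a b} = n.factorial := by
  have hne : Nonempty α := Fintype.card_pos_iff.mp (by omega)
  obtain ⟨a0⟩ := hne
  -- step 1 : listings ↦ transitive permutations
  have hΨprop : ∀ e : Fin (n + 1) ≃ α, ∀ a b : α,
      (permCongrHom e (finRotate (n + 1))).SameCycle a b := by
    intro e a b
    obtain ⟨z, hz⟩ := finRotate_sameCycle n (e.symm a) (e.symm b)
    refine ⟨z, ?_⟩
    rw [← map_zpow, permCongrHom_apply, hz, Equiv.apply_symm_apply]
  set Ψ : {e : Fin (n + 1) ≃ α // e 0 = a0} → {σ : Equiv.Perm α // ∀ a b : α, σ.SameCycle a b} :=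
    fun e => ⟨permCongrHom e.1 (finRotate (n + 1)), hΨprop e.1⟩ with hΨ
  have horb : ∀ (e : Fin (n + 1) ≃ α), e 0 = a0 → ∀ j : Fin (n + 1),
      ((permCongrHom e (finRotate (n + 1))) ^ (j : ℕ)) a0 = e j := by
    intro e he j
    rw [← map_pow, permCongrHom_apply]
    have h0 : e.symm a0 = 0 := by rw [← he, Equiv.symm_apply_apply]
    rw [h0, finRotate_pow]
    simp [Fin.cast_val_eq_self]
  have hΨinj : Function.Injective Ψ := by
    intro e1 e2 heq
    have heq' : (Ψ e1).1 = (Ψ e2).1 := by rw [heq]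
    refine Subtype.ext (Equiv.ext fun j => ?_)
    rw [← horb e1.1 e1.2 j, ← horb e2.1 e2.2 j]
    simp only [hΨ] at heq'
    rw [heq']
  have hΨsur : Function.Surjective Ψ := by
    rintro ⟨σ, hσ⟩
    have hbij := orbit_bijective hσ a0
    set e : Fin (n + 1) ≃ α :=
      (finCongr h.symm).trans (Equiv.ofBijective _ hbij) with he
    have heval : ∀ j : Fin (n + 1), e j = (σ ^ (j : ℕ)) a0 := by
      intro j; simp [he, Equiv.ofBijective, finCongr]
    have he0 : e 0 = a0 := by rw [heval]; simp
    refine ⟨⟨e, he0⟩, ?_⟩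
    refine Subtype.ext (Equiv.ext fun a => ?_)
    obtain ⟨j, rfl⟩ := e.surjective a
    show permCongrHom e (finRotate (n + 1)) (e j) = σ (e j)
    rw [permCongrHom_apply, Equiv.symm_apply_apply, heval, heval, finRotate_succ_apply]
    by_cases hj : (j : ℕ) = n
    · have hj1 : ((j + 1 : Fin (n + 1)) : ℕ) = 0 := by
        rw [Fin.val_add_one]
        simp [Fin.ext_iff, hj, Fin.last]
      have hcard : (σ ^ (n + 1)) a0 = a0 := by
        have := pow_card_fix hσ a0; rwa [h] at this
      rw [hj1, pow_zero, hj, ← Equiv.Perm.mul_apply, ← pow_succ']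
      simp [hcard]
    · have hj1 : ((j + 1 : Fin (n + 1)) : ℕ) = (j : ℕ) + 1 :=
        Fin.val_add_one_of_lt (by
          rw [Fin.lt_iff_val_lt_val, Fin.val_last]
          omega)
      rw [hj1, pow_succ', Equiv.Perm.mul_apply]
  rw [← Fintype.card_of_bijective ⟨hΨinj, hΨsur⟩]
  -- step 2 : count listings with fixed initial value
  have hiff : ∀ (e : Fin (n + 1) ≃ α), e 0 = a0 → ∀ j : Fin (n + 1), j ≠ 0 ↔ e j ≠ a0 := by
    intro e he j
    constructor
    · intro hj hc
      exact hj (e.injective (hc.trans he.symm))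
    · intro hj hc
      exact hj (by rw [hc, he])
  set Θ : {e : Fin (n + 1) ≃ α // e 0 = a0} →
      ({j : Fin (n + 1) // j ≠ 0} ≃ {a : α // a ≠ a0}) :=
    fun e => Equiv.subtypeEquiv e.1 (hiff e.1 e.2) with hΘ
  have hΘinj : Function.Injective Θ := by
    intro e1 e2 heq
    refine Subtype.ext (Equiv.ext fun j => ?_)
    by_cases hj : j = 0
    · rw [hj, e1.2, e2.2]
    · have := congrArg (fun E => (E ⟨j, hj⟩ : {a : α // a ≠ a0}).1) heq
      simpa [hΘ] using this
  have hΘsur : Function.Surjective Θ := by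
    intro ℓ
    set e : Fin (n + 1) ≃ α :=
      { toFun := fun j => if hj : j = 0 then a0 else (ℓ ⟨j, hj⟩).1
        invFun := fun a => if ha : a = a0 then 0 else (ℓ.symm ⟨a, ha⟩).1
        left_inv := by
          intro j
          dsimp only
          by_cases hj : j = 0
          · simp [hj]
          · rw [dif_neg hj, dif_neg (ℓ ⟨j, hj⟩).2]
            have : (⟨(ℓ ⟨j, hj⟩).1, (ℓ ⟨j, hj⟩).2⟩ : {a : α // a ≠ a0}) = ℓ ⟨j, hj⟩ := rfl
            rw [this, Equiv.symm_apply_apply]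
        right_inv := by
          intro a
          dsimp only
          by_cases ha : a = a0
          · simp [ha]
          · rw [dif_neg ha, dif_neg (ℓ.symm ⟨a, ha⟩).2]
            have : (⟨(ℓ.symm ⟨a, ha⟩).1, (ℓ.symm ⟨a, ha⟩).2⟩ : {j : Fin (n + 1) // j ≠ 0}) =
                ℓ.symm ⟨a, ha⟩ := rfl
            rw [this, Equiv.apply_symm_apply] } with he
    have he0 : e 0 = a0 := by simp [he]
    refine ⟨⟨e, he0⟩, ?_⟩
    refine Equiv.ext fun j => Subtype.ext ?_
    show (e j.1 : α) = (ℓ j).1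
    rcases j with ⟨j, hj⟩
    simp [he, hj]
  rw [Fintype.card_of_bijective ⟨hΘinj, hΘsur⟩]
  -- step 3 : count equivalences between two sets of size n
  have c1 : Fintype.card {j : Fin (n + 1) // j ≠ 0} = n := by
    simp [Fintype.card_subtype_compl]
  have c2 : Fintype.card {a : α // a ≠ a0} = n := by
    simp [Fintype.card_subtype_compl, h]
  rw [Fintype.card_equiv (Fintype.equivOfCardEq (c1.trans c2.symm)), c1]

lemma card_transitive (α : Type*) [Fintype α] [DecidableEq α] :
    Fintype.card {σ : Equiv.Perm α // ∀ a b : α, σ.SameCycle a b} =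
      (Fintype.card α - 1).factorial := by
  rcases Nat.eq_zero_or_pos (Fintype.card α) with h0 | hpos
  · have hemp : IsEmpty α := Fintype.card_eq_zero_iff.mp h0
    have : ∀ σ : Equiv.Perm α, ∀ a b : α, σ.SameCycle a b := fun σ a => (hemp.false a).elim
    rw [Fintype.card_congr (Equiv.subtypeUnivEquiv this), Fintype.card_perm, h0]
  · obtain ⟨m, hm⟩ := Nat.exists_eq_add_of_le hpos
    rw [card_transitive_aux (by omega : Fintype.card α = m + 1)]
    congr 1
    omega

section Fiber

variable {α β : Type*}

lemma gather_aux {p : α → β} (c : ∀ b, Equiv.Perm {a // p a = b}) {a : α} {b : β}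
    (h : p a = b) : ((c (p a)) ⟨a, rfl⟩ : {x // p x = p a}).1 = ((c b) ⟨a, h⟩ : {x // p x = b}).1 := by
  subst h; rfl

lemma gather_aux' {p : α → β} (c : ∀ b, Equiv.Perm {a // p a = b}) {a : α} {b : β}
    (h : p a = b) :
    ((c (p a)).symm ⟨a, rfl⟩ : {x // p x = p a}).1 = ((c b).symm ⟨a, h⟩ : {x // p x = b}).1 := by
  subst h; rfl

/-- glue a family of permutations of the fibers of `p` into a permutation of `α`. -/
def gatherPerm (p : α → β) (c : ∀ b, Equiv.Perm {a // p a = b}) : Equiv.Perm α where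
  toFun a := ((c (p a)) ⟨a, rfl⟩).1
  invFun a := ((c (p a)).symm ⟨a, rfl⟩).1
  left_inv a := by
    dsimp only
    set x : {x // p x = p a} := (c (p a)) ⟨a, rfl⟩ with hx
    rw [gather_aux' c x.2]
    have : (⟨x.1, x.2⟩ : {x' // p x' = p a}) = x := rfl
    rw [this, hx, Equiv.symm_apply_apply]
  right_inv a := by
    dsimp only
    set x : {x // p x = p a} := (c (p a)).symm ⟨a, rfl⟩ with hx
    rw [gather_aux c x.2]
    have : (⟨x.1, x.2⟩ : {x' // p x' = p a}) = x := rfl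
    rw [this, hx, Equiv.apply_symm_apply]

lemma gatherPerm_fiber (p : α → β) (c : ∀ b, Equiv.Perm {a // p a = b}) (a : α) :
    p (gatherPerm p c a) = p a := ((c (p a)) ⟨a, rfl⟩).2

/-- permutations preserving the fibers of `p` are products of permutations of fibers. -/
def fiberEquiv (p : α → β) :
    {σ : Equiv.Perm α // ∀ a, p (σ a) = p a} ≃ (∀ b, Equiv.Perm {a // p a = b}) where
  toFun σ b := σ.1.subtypePerm (fun a => by rw [σ.2 a])
  invFun c := ⟨gatherPerm p c, gatherPerm_fiber p c⟩
  left_inv σ := Subtype.ext (Equiv.ext fun a => rfl)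
  right_inv c := by
    funext b
    refine Equiv.ext fun u => Subtype.ext ?_
    show (gatherPerm p (fun b => c b)) u.1 = ((c b) u).1
    show ((c (p u.1)) ⟨u.1, rfl⟩).1 = ((c b) u).1
    rw [gather_aux c u.2]



lemma fiberEquiv_toFun {α β : Type*} (p : α → β) (σ : {σ : Equiv.Perm α // ∀ a, p (σ a) = p a})
    (b : β) : fiberEquiv p σ b = σ.1.subtypePerm (fun a => by rw [σ.2 a]) := rfl

end Fiber


end Trans


section Fib
variable {α β : Type*}

lemma pres_pow {p : α → β} {σ : Equiv.Perm α} (h : ∀ a, p (σ a) = p a) (m : ℕ) (a : α) :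
    p ((σ ^ m) a) = p a := by
  induction m generalizing a with
  | zero => simp
  | succ m ih => rw [pow_succ, Equiv.Perm.mul_apply, ih, h]

lemma pres_zpow {p : α → β} {σ : Equiv.Perm α} (h : ∀ a, p (σ a) = p a) (z : ℤ) (a : α) :
    p ((σ ^ z) a) = p a := by
  cases z with
  | ofNat m => rw [Int.ofNat_eq_coe, zpow_natCast]; exact pres_pow h m a
  | negSucc m =>
      rw [zpow_negSucc]
      have := pres_pow h (m + 1) ((σ ^ (m + 1))⁻¹ a)
      rw [← Equiv.Perm.mul_apply, mul_inv_cancel, Equiv.Perm.one_apply] at this; exact this.symm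

lemma fiberEquiv_sameCycle (p : α → β) (σ : {σ : Equiv.Perm α // ∀ a, p (σ a) = p a}) (b : β)
    (u v : {a // p a = b}) :
    (fiberEquiv p σ b).SameCycle u v ↔ σ.1.SameCycle u.1 v.1 := by
  rw [fiberEquiv_toFun]
  constructor
  · rintro ⟨z, hz⟩
    refine ⟨z, ?_⟩
    rw [Equiv.Perm.subtypePerm_zpow] at hz
    have := congrArg Subtype.val hz
    simpa [Equiv.Perm.subtypePerm_apply] using this
  · rintro ⟨z, hz⟩
    refine ⟨z, ?_⟩
    rw [Equiv.Perm.subtypePerm_zpow]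
    exact Subtype.ext (by simpa [Equiv.Perm.subtypePerm_apply] using hz)

variable [Fintype α] [DecidableEq α] [Fintype β] [DecidableEq β]

lemma card_fiberPreserving (p : α → β) :
    Fintype.card {σ : Equiv.Perm α // ∀ a, p (σ a) = p a} =
      ∏ b : β, (Fintype.card {a // p a = b}).factorial := by
  rw [Fintype.card_congr (fiberEquiv p), Fintype.card_pi]
  exact Finset.prod_congr rfl fun b _ => Fintype.card_perm

lemma card_cycleP (p : α → β) :
    Fintype.card {σ : Equiv.Perm α // ∀ a b : α, σ.SameCycle a b ↔ p a = p b} =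
      ∏ b : β, (Fintype.card {a // p a = b} - 1).factorial := by
  have pres_of_P : ∀ σ : Equiv.Perm α, (∀ a b : α, σ.SameCycle a b ↔ p a = p b) →
      ∀ a, p (σ a) = p a := by
    intro σ hσ a
    exact ((hσ a (σ a)).mp ⟨1, by simp⟩).symm
  have E1 : {σ : Equiv.Perm α // ∀ a b : α, σ.SameCycle a b ↔ p a = p b} ≃
      {σ : {σ : Equiv.Perm α // ∀ a, p (σ a) = p a} //
        ∀ b, ∀ u v : {a // p a = b}, (fiberEquiv p σ b).SameCycle u v} := by
    refine ⟨fun σ => ⟨⟨σ.1, pres_of_P σ.1 σ.2⟩, ?_⟩, fun σ => ⟨σ.1.1, ?_⟩, fun _ => rfl,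
      fun _ => rfl⟩
    · intro b u v
      rw [fiberEquiv_sameCycle]
      exact (σ.2 u.1 v.1).mpr (u.2.trans v.2.symm)
    · intro a b
      constructor
      · rintro ⟨z, hz⟩
        rw [← hz]
        exact (pres_zpow σ.1.2 z a).symm
      · intro hab
        have := σ.2 (p b) ⟨a, hab⟩ ⟨b, rfl⟩
        rw [fiberEquiv_sameCycle] at this
        exact this
  have E2 : {σ : {σ : Equiv.Perm α // ∀ a, p (σ a) = p a} //
        ∀ b, ∀ u v : {a // p a = b}, (fiberEquiv p σ b).SameCycle u v} ≃
      {c : ∀ b, Equiv.Perm {a // p a = b} //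
        ∀ b, ∀ u v : {a // p a = b}, (c b).SameCycle u v} :=
    Equiv.subtypeEquiv (fiberEquiv p) (fun σ => Iff.rfl)
  have E3 : {c : ∀ b, Equiv.Perm {a // p a = b} //
        ∀ b, ∀ u v : {a // p a = b}, (c b).SameCycle u v} ≃
      (∀ b, {x : Equiv.Perm {a // p a = b} // ∀ u v : {a // p a = b}, x.SameCycle u v}) :=
    Equiv.subtypePiEquivPi (β := fun b => Equiv.Perm {a // p a = b}) (p := fun b x => ∀ u v : {a // p a = b}, x.SameCycle u v)
  rw [Fintype.card_congr E1, Fintype.card_congr E2, Fintype.card_congr E3, Fintype.card_pi]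
  exact Finset.prod_congr rfl fun b _ => card_transitive _


end Fib

section Quot
/-- the setoid of the cycle relation -/
def scSetoid {α : Type*} (σ : Equiv.Perm α) : Setoid α :=
  ⟨σ.SameCycle, ⟨fun x => Equiv.Perm.SameCycle.refl σ x, fun h => h.symm, fun h h' => h.trans h'⟩⟩

variable {α : Type*} [Finite α]

lemma card_g (σ : Equiv.Perm α) (i : ℕ) :
    Nat.card {g : α → Fin i // Function.Surjective g ∧ ∀ a b : α, σ.SameCycle a b ↔ g a = g b} =
      if Nat.card (Quotient (scSetoid σ)) = i then i.factorial else 0 := by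
  set Q := Quotient (scSetoid σ) with hQ
  set Ψ : (Q ≃ Fin i) →
      {g : α → Fin i // Function.Surjective g ∧ ∀ a b : α, σ.SameCycle a b ↔ g a = g b} :=
    fun e => ⟨fun a => e (Quotient.mk (scSetoid σ) a),
      by
        intro j
        obtain ⟨q, hq⟩ := Quotient.exists_rep (e.symm j)
        exact ⟨q, by show e ⟦q⟧ = j; rw [hq, Equiv.apply_symm_apply]⟩,
      by
        intro a b
        rw [EmbeddingLike.apply_eq_iff_eq, Quotient.eq]
        exact Iff.rfl⟩ with hΨ
  have hinj : Function.Injective Ψ := by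
    intro e1 e2 h
    refine Equiv.ext fun q => ?_
    induction q using Quotient.inductionOn with
    | h a => exact congrFun (congrArg (Subtype.val) h) a
  have hsur : Function.Surjective Ψ := by
    rintro ⟨g, hgs, hgc⟩
    set F : Q → Fin i := Quotient.lift g (fun a b hab => (hgc a b).mp hab) with hF
    have hFbij : Function.Bijective F := by
      constructor
      · intro q1 q2
        induction q1 using Quotient.inductionOn with
        | h a =>
          induction q2 using Quotient.inductionOn with
          | h b => exact fun hab => Quotient.sound ((hgc a b).mpr hab)
      · intro j
        obtain ⟨a, ha⟩ := hgs j
        exact ⟨Quotient.mk _ a, ha⟩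
    exact ⟨Equiv.ofBijective F hFbij, Subtype.ext (funext fun a => rfl)⟩
  rw [← Nat.card_eq_of_bijective Ψ ⟨hinj, hsur⟩]
  by_cases h : Nat.card Q = i
  · rw [if_pos h]
    have : Finite Q := Quotient.finite _
    letI : Fintype Q := Fintype.ofFinite Q
    letI : DecidableEq Q := Classical.decEq Q
    rw [Nat.card_eq_fintype_card] at h
    rw [Nat.card_eq_fintype_card]
    rw [Fintype.card_equiv (Fintype.equivFinOfCardEq h), h]
  · rw [if_neg h]
    have : IsEmpty (Q ≃ Fin i) := by
      refine ⟨fun e => h ?_⟩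
      rw [Nat.card_congr e, Nat.card_eq_fintype_card, Fintype.card_fin]
    exact Nat.card_of_isEmpty

lemma quot_card_le (σ : Equiv.Perm α) : Nat.card (Quotient (scSetoid σ)) ≤ Nat.card α :=
  Nat.card_le_card_of_surjective _ (Quotient.exists_rep)

lemma le_quot_card {k : ℕ} {G : α → Fin k} (hG : Function.Surjective G) {σ : Equiv.Perm α}
    (hstab : ∀ a, G (σ a) = G a) : k ≤ Nat.card (Quotient (scSetoid σ)) := by
  have hwd : ∀ a b : α, σ.SameCycle a b → G a = G b := by
    rintro a b ⟨z, hz⟩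
    rw [← hz, pres_zpow hstab]
  set F : Quotient (scSetoid σ) → Fin k := Quotient.lift G (fun a b hab => hwd a b hab) with hF
  have hsurj : Function.Surjective F := by
    intro j
    obtain ⟨a, ha⟩ := hG j
    exact ⟨Quotient.mk _ a, ha⟩
  have := Nat.card_le_card_of_surjective F hsurj
  simpa using this


end Quot

lemma mem_surjs {n k : ℕ} {g : Fin n → Fin k} : g ∈ surjs n k ↔ Function.Surjective g := by
  simp [surjs]

lemma pair_filter_card {n k i : ℕ} {G : Fin n → Fin k} (hG : Function.Surjective G)
    (σ : Equiv.Perm (Fin n)) :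
    (((surjs i k ×ˢ surjs n i).filter (fun p => p.1 ∘ p.2 = G)).filter
        (fun p => ∀ a b : Fin n, σ.SameCycle a b ↔ p.2 a = p.2 b)).card =
      if (∀ a, G (σ a) = G a) ∧ Nat.card (Quotient (scSetoid σ)) = i then i.factorial else 0 := by
  by_cases hstab : ∀ a, G (σ a) = G a
  · -- the filtered set is in bijection with surjections with cycle data
    have hRef : ∀ (g : Fin n → Fin i), (∀ a b : Fin n, σ.SameCycle a b ↔ g a = g b) →
        ∀ a b : Fin n, g a = g b → G a = G b := by
      intro g hP a b hab
      obtain ⟨z, hz⟩ := (hP a b).mpr hab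
      rw [← hz, pres_zpow hstab]
    have hcard : (((surjs i k ×ˢ surjs n i).filter (fun p => p.1 ∘ p.2 = G)).filter
          (fun p => ∀ a b : Fin n, σ.SameCycle a b ↔ p.2 a = p.2 b)).card =
        (univ.filter (fun g : Fin n → Fin i =>
          Function.Surjective g ∧ ∀ a b : Fin n, σ.SameCycle a b ↔ g a = g b)).card := by
      refine Finset.card_bij' (fun p _ => p.2)
        (fun g hg => (G ∘ Function.surjInv (by
          simp only [Finset.mem_filter] at hg
          exact hg.2.1), g)) ?_ ?_ ?_ ?_
      · intro p hp
        simp only [Finset.mem_filter, Finset.mem_product] at hp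
        simp only [Finset.mem_filter, Finset.mem_univ, true_and]
        exact ⟨mem_surjs.mp hp.1.1.2, hp.2⟩
      · intro g hg
        simp only [Finset.mem_filter, Finset.mem_univ, true_and] at hg
        obtain ⟨hgs, hgP⟩ := hg
        have hcomp : (G ∘ Function.surjInv hgs) ∘ g = G := by
          funext a
          have h1 : g (Function.surjInv hgs (g a)) = g a :=
            Function.surjInv_eq hgs (g a)
          exact hRef g hgP _ _ h1
        simp only [Finset.mem_filter, Finset.mem_product]
        refine ⟨⟨⟨?_, mem_surjs.mpr hgs⟩, hcomp⟩, hgP⟩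
        · refine mem_surjs.mpr ?_
          intro j
          obtain ⟨a, ha⟩ := hG j
          exact ⟨g a, by rw [← hcomp] at ha; exact ha⟩
      · intro p hp
        simp only [Finset.mem_filter, Finset.mem_product] at hp
        obtain ⟨⟨⟨hh, hgmem⟩, hcomp⟩, hP⟩ := hp
        have hgs := mem_surjs.mp hgmem
        have huniq : ∀ (hs : Function.Surjective p.2), (G ∘ Function.surjInv hs) = p.1 := by
          intro hs
          funext j
          obtain ⟨a, ha⟩ := hgs j
          have h1 : p.2 (Function.surjInv hs j) = p.2 a := by
            rw [Function.surjInv_eq hs j, ha]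
          have h2 : G (Function.surjInv hs j) = G a := hRef p.2 hP _ _ h1
          show G (Function.surjInv hs j) = p.1 j
          rw [h2, ← hcomp, Function.comp_apply, ha]
        exact Prod.ext (huniq _) rfl
      · intro g hg
        rfl
    rw [hcard]
    have : (univ.filter (fun g : Fin n → Fin i =>
          Function.Surjective g ∧ ∀ a b : Fin n, σ.SameCycle a b ↔ g a = g b)).card =
        Nat.card {g : Fin n → Fin i //
          Function.Surjective g ∧ ∀ a b : Fin n, σ.SameCycle a b ↔ g a = g b} := by
      rw [Nat.card_eq_fintype_card, Fintype.card_subtype]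
    rw [this, card_g σ i]
    simp [hstab]
  · rw [if_neg (by tauto)]
    rw [Finset.card_eq_zero, Finset.eq_empty_iff_forall_notMem]
    intro p hp
    simp only [Finset.mem_filter, Finset.mem_product] at hp
    obtain ⟨⟨⟨hh, hgmem⟩, hcomp⟩, hP⟩ := hp
    refine hstab fun a => ?_
    have h1 : p.2 a = p.2 (σ a) := (hP a (σ a)).mp ⟨1, by simp⟩
    calc G (σ a) = p.1 (p.2 (σ a)) := by rw [← hcomp]; rfl
    _ = p.1 (p.2 a) := by rw [h1]
    _ = G a := by rw [← hcomp]; rfl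

lemma w_eq_card {n i : ℕ} (g : Fin n → Fin i) :
    (∏ j : Fin i, (((fiberCard g j) - 1).factorial : ℝ)) =
      ((univ.filter (fun σ : Equiv.Perm (Fin n) =>
        ∀ a b : Fin n, σ.SameCycle a b ↔ g a = g b)).card : ℝ) := by
  have h1 := card_cycleP (α := Fin n) (β := Fin i) g
  simp only [Fintype.card_subtype] at h1
  simp only [fiberCard]
  rw [← Nat.cast_prod]
  norm_cast
  convert h1.symm using 2 <;> congr!

lemma stab_card {n k : ℕ} (G : Fin n → Fin k) :
    ((univ.filter (fun σ : Equiv.Perm (Fin n) => ∀ a, G (σ a) = G a)).card : ℝ) =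
      ∏ j : Fin k, ((fiberCard G j).factorial : ℝ) := by
  have h1 := card_fiberPreserving (α := Fin n) (β := Fin k) G
  simp only [Fintype.card_subtype] at h1
  simp only [fiberCard]
  rw [← Nat.cast_prod]
  norm_cast

lemma core {n k : ℕ} {G : Fin n → Fin k} (hG : Function.Surjective G) :
    ∑ i ∈ Icc k n, (∑ p ∈ (surjs i k ×ˢ surjs n i).filter (fun p => p.1 ∘ p.2 = G),
        ∏ j : Fin i, (((fiberCard p.2 j) - 1).factorial : ℝ)) / (i.factorial : ℝ) =
      ∏ j : Fin k, ((fiberCard G j).factorial : ℝ) := by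
  have step1 : ∀ i : ℕ,
      (∑ p ∈ (surjs i k ×ˢ surjs n i).filter (fun p => p.1 ∘ p.2 = G),
        ∏ j : Fin i, (((fiberCard p.2 j) - 1).factorial : ℝ)) =
      ∑ σ : Equiv.Perm (Fin n),
        (if (∀ a, G (σ a) = G a) ∧ Nat.card (Quotient (scSetoid σ)) = i
          then (i.factorial : ℝ) else 0) := by
    intro i
    calc ∑ p ∈ (surjs i k ×ˢ surjs n i).filter (fun p => p.1 ∘ p.2 = G),
          ∏ j : Fin i, (((fiberCard p.2 j) - 1).factorial : ℝ)
        = ∑ p ∈ (surjs i k ×ˢ surjs n i).filter (fun p => p.1 ∘ p.2 = G),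
          ∑ σ : Equiv.Perm (Fin n),
            (if ∀ a b : Fin n, σ.SameCycle a b ↔ p.2 a = p.2 b then (1 : ℝ) else 0) := by
          refine Finset.sum_congr rfl fun p _ => ?_
          rw [w_eq_card p.2, Finset.sum_boole]
      _ = ∑ σ : Equiv.Perm (Fin n),
          ∑ p ∈ (surjs i k ×ˢ surjs n i).filter (fun p => p.1 ∘ p.2 = G),
            (if ∀ a b : Fin n, σ.SameCycle a b ↔ p.2 a = p.2 b then (1 : ℝ) else 0) :=
          Finset.sum_comm
      _ = ∑ σ : Equiv.Perm (Fin n),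
          (if (∀ a, G (σ a) = G a) ∧ Nat.card (Quotient (scSetoid σ)) = i
            then (i.factorial : ℝ) else 0) := by
          refine Finset.sum_congr rfl fun σ _ => ?_
          rw [Finset.sum_boole, pair_filter_card hG σ]
          split_ifs <;> simp
  calc ∑ i ∈ Icc k n, (∑ p ∈ (surjs i k ×ˢ surjs n i).filter (fun p => p.1 ∘ p.2 = G),
        ∏ j : Fin i, (((fiberCard p.2 j) - 1).factorial : ℝ)) / (i.factorial : ℝ)
      = ∑ i ∈ Icc k n, ∑ σ : Equiv.Perm (Fin n),
          (if (∀ a, G (σ a) = G a) ∧ Nat.card (Quotient (scSetoid σ)) = i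
            then (i.factorial : ℝ) else 0) / (i.factorial : ℝ) := by
        refine Finset.sum_congr rfl fun i _ => ?_
        rw [step1 i, Finset.sum_div]
    _ = ∑ σ : Equiv.Perm (Fin n), ∑ i ∈ Icc k n,
          (if (∀ a, G (σ a) = G a) ∧ Nat.card (Quotient (scSetoid σ)) = i
            then (i.factorial : ℝ) else 0) / (i.factorial : ℝ) := Finset.sum_comm
    _ = ∑ σ : Equiv.Perm (Fin n), (if ∀ a, G (σ a) = G a then (1 : ℝ) else 0) := by
        refine Finset.sum_congr rfl fun σ _ => ?_
        by_cases hst : ∀ a, G (σ a) = G a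
        · rw [if_pos hst]
          have ht : Nat.card (Quotient (scSetoid σ)) ∈ Icc k n := by
            rw [Finset.mem_Icc]
            refine ⟨le_quot_card hG hst, ?_⟩
            have := quot_card_le σ
            simpa using this
          rw [Finset.sum_eq_single (Nat.card (Quotient (scSetoid σ)))]
          · rw [if_pos ⟨hst, rfl⟩, div_self]
            exact_mod_cast (Nat.factorial_pos _).ne'
          · intro b _ hb
            rw [if_neg (by tauto), zero_div]
          · intro hmem
            exact absurd ht hmem
        · rw [if_neg hst]
          refine Finset.sum_eq_zero fun i _ => ?_
          rw [if_neg (by tauto), zero_div]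
    _ = ∏ j : Fin k, ((fiberCard G j).factorial : ℝ) := by
        rw [Finset.sum_boole, stab_card]


end LahAux

/-- The Lah operator satisfies `L(n,k) = Σ_{i=k}^{n} S(i,k) ∘ c(n,i)`, where
`S` and `c` are the Stirling operators of the second and (unsigned) first kind. -/
theorem lah_eq_sum_stirling
    {X : Type*} [Fintype X] [DecidableEq X] {n k : ℕ} (hk : 1 ≤ k) (hkn : k ≤ n)
    (f : (Fin n → X) → ℝ) (hf : IsSymmFun f) (y : Fin k → X) :
    Lop n k f y = ∑ i ∈ Finset.Icc k n, Sop i k (cop n i f) y := by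
  simp only [Lop, Sop, cop]
  rw [← Finset.sum_div]
  congr 1
  have hmaps : ∀ i : ℕ, ∀ p ∈ surjs i k ×ˢ surjs n i, p.1 ∘ p.2 ∈ surjs n k := by
    intro i p hp
    rw [Finset.mem_product] at hp
    exact LahAux.mem_surjs.mpr
      ((LahAux.mem_surjs.mp hp.1).comp (LahAux.mem_surjs.mp hp.2))
  have key2 : ∀ i ∈ Finset.Icc k n,
      (∑ h ∈ surjs i k, (∑ g ∈ surjs n i,
          (∏ j : Fin i, (((fiberCard g j) - 1).factorial : ℝ)) * f ((y ∘ h) ∘ g)) /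
            (i.factorial : ℝ))
      = ∑ G ∈ surjs n k,
          ((∑ p ∈ (surjs i k ×ˢ surjs n i).filter (fun p => p.1 ∘ p.2 = G),
            ∏ j : Fin i, (((fiberCard p.2 j) - 1).factorial : ℝ)) / (i.factorial : ℝ)) *
              f (y ∘ G) := by
    intro i _
    rw [← Finset.sum_div, ← Finset.sum_product', ← Finset.sum_fiberwise_of_maps_to (hmaps i),
      Finset.sum_div]
    refine Finset.sum_congr rfl fun G hG => ?_
    have heq : ∑ p ∈ (surjs i k ×ˢ surjs n i).filter (fun p => p.1 ∘ p.2 = G),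
        (∏ j : Fin i, (((fiberCard p.2 j) - 1).factorial : ℝ)) * f ((y ∘ p.1) ∘ p.2) =
        ∑ p ∈ (surjs i k ×ˢ surjs n i).filter (fun p => p.1 ∘ p.2 = G),
        (∏ j : Fin i, (((fiberCard p.2 j) - 1).factorial : ℝ)) * f (y ∘ G) := by
      refine Finset.sum_congr rfl fun p hp => ?_
      have hc : p.1 ∘ p.2 = G := (Finset.mem_filter.mp hp).2
      rw [show (y ∘ p.1) ∘ p.2 = y ∘ (p.1 ∘ p.2) from rfl, hc]
    rw [heq, ← Finset.sum_mul, mul_div_right_comm]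
  rw [Finset.sum_congr rfl key2, Finset.sum_comm]
  refine Finset.sum_congr rfl fun G hG => ?_
  rw [← Finset.sum_mul, LahAux.core (LahAux.mem_surjs.mp hG)]
end
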